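/- arXiv:2410.03353 — 4 statements merged into one kernel-verified Lean document; each statement's English description precedes it below -/
import Mathlib

section
/- Let ε > 0 and let (f, g) be a pair of ε-potentials. For every x ∈ Ω₀ and t > 0 with x + t ∈ Ω₀, setting T(x) := (∫_{S_x} y dμ₁(y))/μ₁(S_x), one has T(x + t) ≥ (f(x + t) − f(x))/t ≥ T(x); in particular T is nondecreasing on Ω₀. -/
open MeasureTheory Set
open scoped Classical ENNReal

noncomputable section

/-- `μ` is a probability measure supported on `[a,b]` with continuous density `u`
bounded below by `lam` and above by `Lam` on `[a,b]`. -/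
def IsGoodMarginal (μ : Measure ℝ) (u : ℝ → ℝ) (a b lam Lam : ℝ) : Prop :=
  IsProbabilityMeasure μ ∧
  μ = (volume.restrict (Icc a b)).withDensity (fun x => ENNReal.ofReal (u x)) ∧
  ContinuousOn u (Icc a b) ∧
  ∀ x ∈ Icc a b, lam ≤ u x ∧ u x ≤ Lam

/-- `(f,g)` is a pair of `ε`-potentials for the quadratically regularized OT problem. -/
def IsPotentialPair (μ₀ μ₁ : Measure ℝ) (a₀ b₀ a₁ b₁ ε : ℝ) (f g : ℝ → ℝ) : Prop :=
  (∃ K, LipschitzOnWith K f (Icc a₀ b₀)) ∧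
  (∃ K, LipschitzOnWith K g (Icc a₁ b₁)) ∧
  (∀ x ∈ Icc a₀ b₀, ∫ y in Icc a₁ b₁, max (x * y - f x - g y) 0 ∂μ₁ = ε) ∧
  (∀ y ∈ Icc a₁ b₁, ∫ x in Icc a₀ b₀, max (x * y - f x - g y) 0 ∂μ₀ = ε)

/-- the `x`-section `S_x` of the support of the optimal coupling. -/
def secX (f g : ℝ → ℝ) (a₁ b₁ x : ℝ) : Set ℝ :=
  {y ∈ Icc a₁ b₁ | 0 ≤ x * y - f x - g y}

/-- the `y`-section `S^y` of the support of the optimal coupling. -/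
def secY (f g : ℝ → ℝ) (a₀ b₀ y : ℝ) : Set ℝ :=
  {x ∈ Icc a₀ b₀ | 0 ≤ x * y - f x - g y}

/-- `T_ε(x) = (∫_{S_x} y dμ₁)/μ₁(S_x)`, the derivative `f'` of the potential `f`. -/
def Tmap (μ₁ : Measure ℝ) (f g : ℝ → ℝ) (a₁ b₁ x : ℝ) : ℝ :=
  (∫ y in secX f g a₁ b₁ x, y ∂μ₁) / (μ₁ (secX f g a₁ b₁ x)).toReal

/-- the symmetric quantity, the derivative `g'` of the potential `g`. -/
def Gmap (μ₀ : Measure ℝ) (f g : ℝ → ℝ) (a₀ b₀ y : ℝ) : ℝ :=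
  (∫ x in secY f g a₀ b₀ y, x ∂μ₀) / (μ₀ (secY f g a₀ b₀ y)).toReal

/-- left endpoint `y_m(x)` of `S_x`. -/
def ymF (f g : ℝ → ℝ) (a₁ b₁ x : ℝ) : ℝ := sInf (secX f g a₁ b₁ x)

/-- right endpoint `y_M(x)` of `S_x`. -/
def yMF (f g : ℝ → ℝ) (a₁ b₁ x : ℝ) : ℝ := sSup (secX f g a₁ b₁ x)

/-- left endpoint `x_m(y)` of `S^y`. -/
def xmF (f g : ℝ → ℝ) (a₀ b₀ y : ℝ) : ℝ := sInf (secY f g a₀ b₀ y)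

/-- right endpoint `x_M(y)` of `S^y`. -/
def xMF (f g : ℝ → ℝ) (a₀ b₀ y : ℝ) : ℝ := sSup (secY f g a₀ b₀ y)

/-- `T₀` is the (nondecreasing) Monge map from `μ₀` to `μ₁`. -/
def IsMongeMap (μ₀ μ₁ : Measure ℝ) (T₀ : ℝ → ℝ) : Prop :=
  Monotone T₀ ∧ Measure.map T₀ μ₀ = μ₁

/-- convex conjugate relative to `[a,b]`. -/
def conjOn (f : ℝ → ℝ) (a b y : ℝ) : ℝ := sSup ((fun x => x * y - f x) '' Icc a b)

section Aux

variable {a₁ b₁ ε : ℝ} {μ₁ : Measure ℝ} {f g : ℝ → ℝ}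

lemma secX_subset (x : ℝ) : secX f g a₁ b₁ x ⊆ Icc a₁ b₁ := fun _ hy => hy.1

lemma secX_isClosed (hg : ContinuousOn g (Icc a₁ b₁)) (x : ℝ) :
    IsClosed (secX f g a₁ b₁ x) := by
  have h : secX f g a₁ b₁ x = Icc a₁ b₁ ∩ (fun y => x * y - f x - g y) ⁻¹' (Ici 0) := by
    ext y; simp [secX, mem_Ici]
  rw [h]
  have hc : ContinuousOn (fun y => x * y - f x - g y) (Icc a₁ b₁) :=
    (((continuous_const.mul continuous_id).continuousOn.sub continuousOn_const).sub hg)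
  exact hc.preimage_isClosed_of_isClosed isClosed_Icc isClosed_Ici

lemma int_cont (hg : ContinuousOn g (Icc a₁ b₁)) [IsFiniteMeasure μ₁] (x : ℝ) :
    IntegrableOn (fun y => x * y - f x - g y) (Icc a₁ b₁) μ₁ :=
  ((((continuous_const.mul continuous_id).continuousOn.sub continuousOn_const).sub
    hg)).integrableOn_compact isCompact_Icc

lemma int_max (hg : ContinuousOn g (Icc a₁ b₁)) [IsFiniteMeasure μ₁] (x : ℝ) :
    IntegrableOn (fun y => max (x * y - f x - g y) 0) (Icc a₁ b₁) μ₁ :=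
  ((continuous_id.max continuous_const).comp_continuousOn
    (((continuous_const.mul continuous_id).continuousOn.sub continuousOn_const).sub
    hg)).integrableOn_compact isCompact_Icc

lemma sec_eq (hg : ContinuousOn g (Icc a₁ b₁)) [IsFiniteMeasure μ₁] (x : ℝ)
    (hx : ∫ y in Icc a₁ b₁, max (x * y - f x - g y) 0 ∂μ₁ = ε) :
    ∫ y in secX f g a₁ b₁ x, (x * y - f x - g y) ∂μ₁ = ε := by
  have hmeas : MeasurableSet (secX f g a₁ b₁ x) := (secX_isClosed hg x).measurableSet
  have h1 : ∫ y in Icc a₁ b₁, max (x * y - f x - g y) 0 ∂μ₁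
      = ∫ y in Icc a₁ b₁, (secX f g a₁ b₁ x).indicator (fun y => x * y - f x - g y) y ∂μ₁ := by
    refine setIntegral_congr_fun measurableSet_Icc (fun y hy => ?_)
    by_cases hmem : y ∈ secX f g a₁ b₁ x
    · rw [indicator_of_mem hmem]; exact max_eq_left hmem.2
    · rw [indicator_of_notMem hmem]
      refine max_eq_right (le_of_lt ?_)
      by_contra hcon
      exact hmem ⟨hy, le_of_not_gt hcon⟩
  rw [h1, setIntegral_indicator hmeas,
    inter_eq_self_of_subset_right (secX_subset x)] at hx
  exact hx

lemma sec_pos (hg : ContinuousOn g (Icc a₁ b₁)) [IsFiniteMeasure μ₁] (x : ℝ) (hε : 0 < ε)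
    (hx : ∫ y in Icc a₁ b₁, max (x * y - f x - g y) 0 ∂μ₁ = ε) :
    0 < (μ₁ (secX f g a₁ b₁ x)).toReal := by
  refine ENNReal.toReal_pos (fun h0 => ?_) (measure_ne_top _ _)
  have := sec_eq hg x hx
  rw [Measure.restrict_eq_zero.2 h0, integral_zero_measure] at this
  exact absurd this (by linarith)

lemma step (hg : ContinuousOn g (Icc a₁ b₁)) [IsFiniteMeasure μ₁] (x x' : ℝ)
    (hx : ∫ y in Icc a₁ b₁, max (x * y - f x - g y) 0 ∂μ₁ = ε)
    (hx' : ∫ y in Icc a₁ b₁, max (x' * y - f x' - g y) 0 ∂μ₁ = ε) :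
    (x' - x) * (∫ y in secX f g a₁ b₁ x, y ∂μ₁)
      ≤ (f x' - f x) * (μ₁ (secX f g a₁ b₁ x)).toReal := by
  set S := secX f g a₁ b₁ x with hS
  have hmeas : MeasurableSet S := (secX_isClosed hg x).measurableSet
  have hsub : S ⊆ Icc a₁ b₁ := secX_subset x
  have hμSne : μ₁ S ≠ ⊤ := measure_ne_top _ _
  have hIy : IntegrableOn (fun y : ℝ => y) S μ₁ :=
    (continuous_id.continuousOn.integrableOn_compact isCompact_Icc).mono_set hsub
  have hIx : IntegrableOn (fun y => x * y - f x - g y) S μ₁ := (int_cont hg x).mono_set hsub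
  have hIx' : IntegrableOn (fun y => x' * y - f x' - g y) S μ₁ := (int_cont hg x').mono_set hsub
  have hImax' : IntegrableOn (fun y => max (x' * y - f x' - g y) 0) (Icc a₁ b₁) μ₁ :=
    int_max hg x'
  have le2 : ∫ y in S, (x' * y - f x' - g y) ∂μ₁ ≤ ε := by
    calc ∫ y in S, (x' * y - f x' - g y) ∂μ₁
        ≤ ∫ y in S, max (x' * y - f x' - g y) 0 ∂μ₁ :=
          setIntegral_mono_on hIx' (hImax'.mono_set hsub) hmeas (fun y _ => le_max_left _ _)
      _ ≤ ∫ y in Icc a₁ b₁, max (x' * y - f x' - g y) 0 ∂μ₁ :=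
          setIntegral_mono_set hImax'
            (Filter.Eventually.of_forall (fun y => le_max_right _ _))
            (HasSubset.Subset.eventuallyLE hsub)
      _ = ε := hx'
  have eq1 : ∫ y in S, (x * y - f x - g y) ∂μ₁ = ε := sec_eq hg x hx
  have hdiff : ∫ y in S, (x' * y - f x' - g y) ∂μ₁ - ∫ y in S, (x * y - f x - g y) ∂μ₁
      = (x' - x) * (∫ y in S, y ∂μ₁) - (f x' - f x) * (μ₁ S).toReal := by
    rw [← integral_sub hIx' hIx]
    have : ∀ y : ℝ, (x' * y - f x' - g y) - (x * y - f x - g y)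
        = (x' - x) * y - (f x' - f x) := fun y => by ring
    rw [integral_congr_ae (Filter.Eventually.of_forall this)]
    rw [integral_sub (hIy.const_mul _) (integrableOn_const hμSne)]
    rw [integral_const_mul, setIntegral_const, smul_eq_mul, measureReal_def]
    ring
  have := le2
  rw [show (∫ y in S, (x' * y - f x' - g y) ∂μ₁)
      = (∫ y in S, (x' * y - f x' - g y) ∂μ₁ - ∫ y in S, (x * y - f x - g y) ∂μ₁) + ε by
        rw [eq1]; ring, hdiff] at this
  linarith

end Aux

theorem stmt0
    (a₀ b₀ a₁ b₁ lam Lam : ℝ) (μ₀ μ₁ : Measure ℝ) (u₀ u₁ : ℝ → ℝ)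
    (hab₀ : a₀ < b₀) (hab₁ : a₁ < b₁) (hlam : 0 < lam)
    (hμ₀ : IsGoodMarginal μ₀ u₀ a₀ b₀ lam Lam)
    (hμ₁ : IsGoodMarginal μ₁ u₁ a₁ b₁ lam Lam)
    (ε : ℝ) (hε : 0 < ε) (f g : ℝ → ℝ)
    (hfg : IsPotentialPair μ₀ μ₁ a₀ b₀ a₁ b₁ ε f g) :
    (∀ x ∈ Icc a₀ b₀, ∀ t : ℝ, 0 < t → x + t ∈ Icc a₀ b₀ →
      Tmap μ₁ f g a₁ b₁ x ≤ (f (x + t) - f x) / t ∧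
      (f (x + t) - f x) / t ≤ Tmap μ₁ f g a₁ b₁ (x + t)) ∧
    MonotoneOn (Tmap μ₁ f g a₁ b₁) (Icc a₀ b₀) := by
  obtain ⟨hfLip, hgLip, hF, hG⟩ := hfg
  haveI : IsProbabilityMeasure μ₁ := hμ₁.1
  obtain ⟨K, hK⟩ := hgLip
  have hg : ContinuousOn g (Icc a₁ b₁) := hK.continuousOn
  have key1 : ∀ x ∈ Icc a₀ b₀, ∀ x' ∈ Icc a₀ b₀, x < x' →
      Tmap μ₁ f g a₁ b₁ x ≤ (f x' - f x) / (x' - x) := by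
    intro x hx x' hx' hlt
    have hm := sec_pos hg x hε (hF x hx)
    have hst := step hg x x' (hF x hx) (hF x' hx')
    rw [Tmap, div_le_div_iff₀ hm (by linarith : (0:ℝ) < x' - x)]
    nlinarith [hst]
  have key2 : ∀ x ∈ Icc a₀ b₀, ∀ x' ∈ Icc a₀ b₀, x < x' →
      (f x' - f x) / (x' - x) ≤ Tmap μ₁ f g a₁ b₁ x' := by
    intro x hx x' hx' hlt
    have hm := sec_pos hg x' hε (hF x' hx')
    have hst := step hg x' x (hF x' hx') (hF x hx)
    rw [Tmap, div_le_div_iff₀ (by linarith : (0:ℝ) < x' - x) hm]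
    nlinarith [hst]
  constructor
  · intro x hx t ht hxt
    have h1 := key1 x hx (x + t) hxt (by linarith)
    have h2 := key2 x hx (x + t) hxt (by linarith)
    rw [show x + t - x = t by ring] at h1 h2
    exact ⟨h1, h2⟩
  · intro a ha b hb hab
    rcases hab.eq_or_lt with rfl | hlt
    · exact le_refl _
    · exact (key1 a ha b hb hlt).trans (key2 a ha b hb hlt)
end
end

section
/- Let ε > 0 and let (f, g) be a pair of ε-potentials such that sup_{x ∈ Ω₀} |S_x| ≤ (b₁ − a₁)/3. Then there is exactly one point x^{(M)} ∈ (a₀, b₀) with y_M(x^{(M)}) = b₁ and ξ(x^{(M)}, b₁) = 0, and exactly one point x^{(m)} ∈ (a₀, b₀) with y_m(x^{(m)}) = a₁ and ξ(x^{(m)}, a₁) = 0. The maps x ↦ y_m(x) and x ↦ y_M(x) are nondecreasing on Ω₀; more precisely, y_m(x) = a₁ for x ∈ [a₀, x^{(m)}] and x ↦ y_m(x) is strictly increasing on (x^{(m)}, b₀], while y_M(x) = b₁ for x ∈ [x^{(M)}, b₀] and x ↦ y_M(x) is strictly increasing on [a₀, x^{(M)}). -/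
open MeasureTheory Set Topology Filter
open scoped Classical ENNReal

noncomputable section

namespace QROTAux

structure Setup (μ₀ μ₁ : Measure ℝ) (a₀ b₀ a₁ b₁ ε : ℝ) (f g : ℝ → ℝ) : Prop where
  hab₀ : a₀ < b₀
  hab₁ : a₁ < b₁
  hε : 0 < ε
  hfc : ContinuousOn f (Icc a₀ b₀)
  hgc : ContinuousOn g (Icc a₁ b₁)
  hac₀ : μ₀ ≪ (volume : Measure ℝ)
  hac₁ : μ₁ ≪ (volume : Measure ℝ)
  hfin₀ : IsFiniteMeasure μ₀
  hfin₁ : IsFiniteMeasure μ₁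
  hint₁ : ∀ x ∈ Icc a₀ b₀, ∫ y in Icc a₁ b₁, max (x * y - f x - g y) 0 ∂μ₁ = ε
  hint₀ : ∀ y ∈ Icc a₁ b₁, ∫ x in Icc a₀ b₀, max (x * y - f x - g y) 0 ∂μ₀ = ε

variable {μ₀ μ₁ : Measure ℝ} {a₀ b₀ a₁ b₁ ε : ℝ} {f g : ℝ → ℝ}

lemma xicont₁ (S : Setup μ₀ μ₁ a₀ b₀ a₁ b₁ ε f g) (x : ℝ) :
    ContinuousOn (fun y => x * y - f x - g y) (Icc a₁ b₁) := by
  exact (((continuous_const.mul continuous_id).continuousOn.sub continuousOn_const).sub S.hgc)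

lemma xicont₀ (S : Setup μ₀ μ₁ a₀ b₀ a₁ b₁ ε f g) (y : ℝ) :
    ContinuousOn (fun x => x * y - f x - g y) (Icc a₀ b₀) := by
  exact (((continuous_id.mul continuous_const).continuousOn.sub S.hfc).sub continuousOn_const)

lemma integrable₁ (S : Setup μ₀ μ₁ a₀ b₀ a₁ b₁ ε f g) (x : ℝ) :
    IntegrableOn (fun y => max (x * y - f x - g y) 0) (Icc a₁ b₁) μ₁ := by
  haveI := S.hfin₁
  exact ContinuousOn.integrableOn_compact isCompact_Icc (ContinuousOn.sup (xicont₁ S x) continuousOn_const)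

lemma integrable₀ (S : Setup μ₀ μ₁ a₀ b₀ a₁ b₁ ε f g) (y : ℝ) :
    IntegrableOn (fun x => max (x * y - f x - g y) 0) (Icc a₀ b₀) μ₀ := by
  haveI := S.hfin₀
  exact ContinuousOn.integrableOn_compact isCompact_Icc (ContinuousOn.sup (xicont₀ S y) continuousOn_const)

/-- strict integral comparison: impossible to have equal integrals with h ≤ h' and
strict inequality on a non-null set. -/
lemma no_strict_eq {μ : Measure ℝ} {s : Set ℝ} (hs : MeasurableSet s)
    {h h' : ℝ → ℝ} (hint : IntegrableOn h s μ) (hint' : IntegrableOn h' s μ)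
    (hle : ∀ y ∈ s, h y ≤ h' y) (heq : ∫ y in s, h y ∂μ = ∫ y in s, h' y ∂μ)
    {E : Set ℝ} (hE : ∀ y ∈ E, y ∈ s ∧ h y < h' y) (hμE : μ E ≠ 0) : False := by
  have hdiff : IntegrableOn (fun y => h' y - h y) s μ := hint'.sub hint
  have hnn : 0 ≤ᵐ[μ.restrict s] fun y => h' y - h y := by
    filter_upwards [ae_restrict_mem hs] with y hy
    exact sub_nonneg.2 (hle y hy)
  have hzero : ∫ y in s, (h' y - h y) ∂μ = 0 := by
    rw [integral_sub hint' hint, heq, sub_self]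
  have hae : (fun y => h' y - h y) =ᵐ[μ.restrict s] 0 :=
    (integral_eq_zero_iff_of_nonneg_ae hnn hdiff).1 hzero
  have hnull : μ.restrict s {y | h' y - h y ≠ 0} = 0 := hae
  rw [Measure.restrict_apply' hs] at hnull
  apply hμE
  refine measure_mono_null ?_ hnull
  intro y hy
  rcases hE y hy with ⟨hys, hlt⟩
  exact ⟨by simpa using (sub_ne_zero.2 (ne_of_gt hlt)), hys⟩

lemma posmeas₁ (S : Setup μ₀ μ₁ a₀ b₀ a₁ b₁ ε f g) {x : ℝ} (hx : x ∈ Icc a₀ b₀) :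
    μ₁ {y ∈ Icc a₁ b₁ | 0 < x * y - f x - g y} ≠ 0 := by
  intro h0
  have hae : ∀ᵐ y ∂(μ₁.restrict (Icc a₁ b₁)), y ∉ {y ∈ Icc a₁ b₁ | 0 < x * y - f x - g y} := by
    refine ae_restrict_of_ae ?_
    rw [ae_iff]
    simpa only [not_not, Set.setOf_mem_eq] using h0
  have : ∫ y in Icc a₁ b₁, max (x * y - f x - g y) 0 ∂μ₁ = 0 := by
    rw [show (0:ℝ) = ∫ _ in Icc a₁ b₁, (0:ℝ) ∂μ₁ by simp]
    apply integral_congr_ae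
    filter_upwards [ae_restrict_mem measurableSet_Icc, hae] with y hy hny
    have : ¬ (0 < x * y - f x - g y) := fun hlt => hny ⟨hy, hlt⟩
    simp [max_eq_right (not_lt.1 this)]
  rw [S.hint₁ x hx] at this
  exact absurd this (ne_of_gt S.hε)

lemma posmeas₀ (S : Setup μ₀ μ₁ a₀ b₀ a₁ b₁ ε f g) {y : ℝ} (hy : y ∈ Icc a₁ b₁) :
    μ₀ {x ∈ Icc a₀ b₀ | 0 < x * y - f x - g y} ≠ 0 := by
  intro h0
  have hae : ∀ᵐ x ∂(μ₀.restrict (Icc a₀ b₀)), x ∉ {x ∈ Icc a₀ b₀ | 0 < x * y - f x - g y} := by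
    refine ae_restrict_of_ae ?_
    rw [ae_iff]
    simpa only [not_not, Set.setOf_mem_eq] using h0
  have : ∫ x in Icc a₀ b₀, max (x * y - f x - g y) 0 ∂μ₀ = 0 := by
    rw [show (0:ℝ) = ∫ _ in Icc a₀ b₀, (0:ℝ) ∂μ₀ by simp]
    apply integral_congr_ae
    filter_upwards [ae_restrict_mem measurableSet_Icc, hae] with x hx hnx
    have : ¬ (0 < x * y - f x - g y) := fun hlt => hnx ⟨hx, hlt⟩
    simp [max_eq_right (not_lt.1 this)]
  rw [S.hint₀ y hy] at this
  exact absurd this (ne_of_gt S.hε)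

end QROTAux

namespace QROTAux

variable {μ₀ μ₁ : Measure ℝ} {a₀ b₀ a₁ b₁ ε : ℝ} {f g : ℝ → ℝ}

lemma secX_subset : secX f g a₁ b₁ x ⊆ Icc a₁ b₁ := fun y hy => hy.1

lemma secX_closed (S : Setup μ₀ μ₁ a₀ b₀ a₁ b₁ ε f g) (x : ℝ) :
    IsClosed (secX f g a₁ b₁ x) := by
  have : secX f g a₁ b₁ x
      = Icc a₁ b₁ ∩ (fun y => x * y - f x - g y) ⁻¹' Ici 0 := by
    ext y; simp [secX, Set.mem_sep_iff, Set.mem_preimage, Set.mem_Ici]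
  rw [this]
  exact (xicont₁ S x).preimage_isClosed_of_isClosed isClosed_Icc isClosed_Ici

lemma secX_nonempty (S : Setup μ₀ μ₁ a₀ b₀ a₁ b₁ ε f g) {x : ℝ} (hx : x ∈ Icc a₀ b₀) :
    (secX f g a₁ b₁ x).Nonempty := by
  obtain ⟨y, hy⟩ := nonempty_of_measure_ne_zero (posmeas₁ S hx)
  exact ⟨y, hy.1, le_of_lt hy.2⟩

lemma ym_mem (S : Setup μ₀ μ₁ a₀ b₀ a₁ b₁ ε f g) {x : ℝ} (hx : x ∈ Icc a₀ b₀) :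
    sInf (secX f g a₁ b₁ x) ∈ secX f g a₁ b₁ x :=
  (secX_closed S x).csInf_mem (secX_nonempty S hx)
    (BddBelow.mono secX_subset bddBelow_Icc)

lemma yM_mem (S : Setup μ₀ μ₁ a₀ b₀ a₁ b₁ ε f g) {x : ℝ} (hx : x ∈ Icc a₀ b₀) :
    sSup (secX f g a₁ b₁ x) ∈ secX f g a₁ b₁ x :=
  (secX_closed S x).csSup_mem (secX_nonempty S hx)
    (BddAbove.mono secX_subset bddAbove_Icc)

lemma le_yM {x y : ℝ} (hy : y ∈ secX f g a₁ b₁ x) : y ≤ sSup (secX f g a₁ b₁ x) :=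
  le_csSup (BddAbove.mono secX_subset bddAbove_Icc) hy

lemma ym_le {x y : ℝ} (hy : y ∈ secX f g a₁ b₁ x) : sInf (secX f g a₁ b₁ x) ≤ y :=
  csInf_le (BddBelow.mono secX_subset bddBelow_Icc) hy

/-- `g` is convex on `[a₁, b₁]`. -/
lemma gconvex (S : Setup μ₀ μ₁ a₀ b₀ a₁ b₁ ε f g) : ConvexOn ℝ (Icc a₁ b₁) g := by
  refine ⟨convex_Icc _ _, ?_⟩
  rintro y₁ h₁ y₂ h₂ t s ht hs hts
  by_contra hcon
  push_neg at hcon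
  simp only [smul_eq_mul] at hcon
  set yb := t * y₁ + s * y₂ with hyb
  have hybm : yb ∈ Icc a₁ b₁ := by
    have := (convex_Icc a₁ b₁) h₁ h₂ ht hs hts
    simpa [smul_eq_mul, ← hyb] using this
  have hδ : 0 < g yb - (t * g y₁ + s * g y₂) := by linarith
  have hfx : ∀ x : ℝ, t * f x + s * f x = f x := by
    intro x; rw [← add_mul, hts, one_mul]
  have hkey : ∀ x : ℝ, x * yb - f x - g yb
      < t * (x * y₁ - f x - g y₁) + s * (x * y₂ - f x - g y₂) := by
    intro x
    have hyb' : x * yb = t * (x * y₁) + s * (x * y₂) := by rw [hyb]; ring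
    have e1 : t * (x * y₁ - f x - g y₁) = t * (x * y₁) - t * f x - t * g y₁ := by ring
    have e2 : s * (x * y₂ - f x - g y₂) = s * (x * y₂) - s * f x - s * g y₂ := by ring
    linarith [hfx x]
  refine no_strict_eq (μ := μ₀) measurableSet_Icc (integrable₀ S yb)
    (((integrable₀ S y₁).const_mul t).add ((integrable₀ S y₂).const_mul s))
    (h := fun x => max (x * yb - f x - g yb) 0)
    (h' := fun x => t * max (x * y₁ - f x - g y₁) 0 + s * max (x * y₂ - f x - g y₂) 0)
    ?_ ?_ (E := {x ∈ Icc a₀ b₀ | 0 < x * yb - f x - g yb}) ?_ (posmeas₀ S hybm)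
  · intro x _
    show max (x * yb - f x - g yb) 0 ≤
      t * max (x * y₁ - f x - g y₁) 0 + s * max (x * y₂ - f x - g y₂) 0
    have h1 : t * (x * y₁ - f x - g y₁) ≤ t * max (x * y₁ - f x - g y₁) 0 :=
      mul_le_mul_of_nonneg_left (le_max_left _ _) ht
    have h2 : s * (x * y₂ - f x - g y₂) ≤ s * max (x * y₂ - f x - g y₂) 0 :=
      mul_le_mul_of_nonneg_left (le_max_left _ _) hs
    rcases le_or_gt (x * yb - f x - g yb) 0 with hle | hlt
    · have h1' : 0 ≤ t * max (x * y₁ - f x - g y₁) 0 := mul_nonneg ht (le_max_right _ _)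
      have h2' : 0 ≤ s * max (x * y₂ - f x - g y₂) 0 := mul_nonneg hs (le_max_right _ _)
      rw [max_eq_right hle]; linarith
    · rw [max_eq_left (le_of_lt hlt)]
      linarith [hkey x]
  · rw [S.hint₀ yb hybm]
    rw [integral_add ((integrable₀ S y₁).const_mul t) ((integrable₀ S y₂).const_mul s)]
    rw [integral_const_mul, integral_const_mul, S.hint₀ y₁ h₁, S.hint₀ y₂ h₂]
    rw [← add_mul, hts, one_mul]
  · rintro x ⟨hx, hpos⟩
    refine ⟨hx, ?_⟩
    have h1 : t * (x * y₁ - f x - g y₁) ≤ t * max (x * y₁ - f x - g y₁) 0 :=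
      mul_le_mul_of_nonneg_left (le_max_left _ _) ht
    have h2 : s * (x * y₂ - f x - g y₂) ≤ s * max (x * y₂ - f x - g y₂) 0 :=
      mul_le_mul_of_nonneg_left (le_max_left _ _) hs
    show max (x * yb - f x - g yb) 0 <
      t * max (x * y₁ - f x - g y₁) 0 + s * max (x * y₂ - f x - g y₂) 0
    rw [max_eq_left (le_of_lt hpos)]
    linarith [hkey x]

end QROTAux

namespace QROTAux

variable {μ₀ μ₁ : Measure ℝ} {a₀ b₀ a₁ b₁ ε : ℝ} {f g : ℝ → ℝ}

lemma secX_convex (S : Setup μ₀ μ₁ a₀ b₀ a₁ b₁ ε f g) (x : ℝ) :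
    Convex ℝ (secX f g a₁ b₁ x) := by
  have haff : ConvexOn ℝ (Icc a₁ b₁) (fun y : ℝ => f x - x * y) := by
    refine ⟨convex_Icc _ _, ?_⟩
    intro y₁ _ y₂ _ t s ht hs hts
    simp only [smul_eq_mul]
    have : f x - x * (t * y₁ + s * y₂) = t * (f x - x * y₁) + s * (f x - x * y₂) := by
      have : t * f x + s * f x = f x := by rw [← add_mul, hts, one_mul]
      nlinarith [this]
    rw [this]
  have hφ : ConvexOn ℝ (Icc a₁ b₁) (fun y : ℝ => g y + (f x - x * y)) :=
    (gconvex S).add haff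
  have := hφ.convex_le 0
  have heq : secX f g a₁ b₁ x = {y ∈ Icc a₁ b₁ | (fun y : ℝ => g y + (f x - x * y)) y ≤ 0} := by
    ext y
    simp only [secX, Set.mem_sep_iff]
    constructor
    · rintro ⟨h1, h2⟩; exact ⟨h1, by linarith⟩
    · rintro ⟨h1, h2⟩; refine ⟨h1, ?_⟩; have h3 : g y + (f x - x * y) ≤ 0 := h2; linarith
  rw [heq]; exact this

lemma secX_eq_Icc (S : Setup μ₀ μ₁ a₀ b₀ a₁ b₁ ε f g) {x : ℝ} (hx : x ∈ Icc a₀ b₀) :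
    secX f g a₁ b₁ x = Icc (sInf (secX f g a₁ b₁ x)) (sSup (secX f g a₁ b₁ x)) := by
  apply Subset.antisymm
  · intro y hy
    exact ⟨ym_le hy, le_yM hy⟩
  · exact ((secX_convex S x).ordConnected).out (ym_mem S hx) (yM_mem S hx)

/-- strict upper slope bound : `f x' - f x < (x' - x) * y_M(x')`. -/
lemma slope_lt (S : Setup μ₀ μ₁ a₀ b₀ a₁ b₁ ε f g) {x x' : ℝ}
    (hx : x ∈ Icc a₀ b₀) (hx' : x' ∈ Icc a₀ b₀) (hlt : x < x') :
    f x' - f x < (x' - x) * sSup (secX f g a₁ b₁ x') := by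
  by_contra hcon
  push_neg at hcon
  set yM' := sSup (secX f g a₁ b₁ x') with hyM'
  haveI := S.hfin₁
  refine no_strict_eq (μ := μ₁) measurableSet_Icc (integrable₁ S x') (integrable₁ S x)
    (h := fun y => max (x' * y - f x' - g y) 0) (h' := fun y => max (x * y - f x - g y) 0)
    ?_ ?_ (E := {y ∈ Icc a₁ b₁ | 0 < x' * y - f x' - g y} \ {yM'}) ?_ ?_
  · intro y hy
    show max (x' * y - f x' - g y) 0 ≤ max (x * y - f x - g y) 0
    rcases le_or_gt (x' * y - f x' - g y) 0 with hle | hpos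
    · rw [max_eq_right hle]; exact le_max_right _ _
    · have hmem : y ∈ secX f g a₁ b₁ x' := ⟨hy, le_of_lt hpos⟩
      have hyle : y ≤ yM' := le_yM hmem
      have : x' * y - f x' - g y ≤ x * y - f x - g y := by nlinarith
      calc max (x' * y - f x' - g y) 0 = x' * y - f x' - g y := max_eq_left (le_of_lt hpos)
        _ ≤ x * y - f x - g y := this
        _ ≤ max (x * y - f x - g y) 0 := le_max_left _ _
  · rw [S.hint₁ x' hx', S.hint₁ x hx]
  · rintro y ⟨⟨hy, hpos⟩, hne⟩
    have hmem : y ∈ secX f g a₁ b₁ x' := ⟨hy, le_of_lt hpos⟩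
    have hyle : y < yM' := lt_of_le_of_ne (le_yM hmem) (by simpa using hne)
    refine ⟨hy, ?_⟩
    show max (x' * y - f x' - g y) 0 < max (x * y - f x - g y) 0
    have : x' * y - f x' - g y < x * y - f x - g y := by nlinarith
    calc max (x' * y - f x' - g y) 0 = x' * y - f x' - g y := max_eq_left (le_of_lt hpos)
      _ < x * y - f x - g y := this
      _ ≤ max (x * y - f x - g y) 0 := le_max_left _ _
  · rw [measure_diff_null (S.hac₁ (Real.volume_singleton))]
    exact posmeas₁ S hx'

/-- strict lower slope bound : `(x' - x) * y_m(x) < f x' - f x`. -/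
lemma slope_gt (S : Setup μ₀ μ₁ a₀ b₀ a₁ b₁ ε f g) {x x' : ℝ}
    (hx : x ∈ Icc a₀ b₀) (hx' : x' ∈ Icc a₀ b₀) (hlt : x < x') :
    (x' - x) * sInf (secX f g a₁ b₁ x) < f x' - f x := by
  by_contra hcon
  push_neg at hcon
  set ym := sInf (secX f g a₁ b₁ x) with hym
  haveI := S.hfin₁
  refine no_strict_eq (μ := μ₁) measurableSet_Icc (integrable₁ S x) (integrable₁ S x')
    (h := fun y => max (x * y - f x - g y) 0) (h' := fun y => max (x' * y - f x' - g y) 0)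
    ?_ ?_ (E := {y ∈ Icc a₁ b₁ | 0 < x * y - f x - g y} \ {ym}) ?_ ?_
  · intro y hy
    show max (x * y - f x - g y) 0 ≤ max (x' * y - f x' - g y) 0
    rcases le_or_gt (x * y - f x - g y) 0 with hle | hpos
    · rw [max_eq_right hle]; exact le_max_right _ _
    · have hmem : y ∈ secX f g a₁ b₁ x := ⟨hy, le_of_lt hpos⟩
      have hyge : ym ≤ y := ym_le hmem
      have : x * y - f x - g y ≤ x' * y - f x' - g y := by nlinarith
      calc max (x * y - f x - g y) 0 = x * y - f x - g y := max_eq_left (le_of_lt hpos)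
        _ ≤ x' * y - f x' - g y := this
        _ ≤ max (x' * y - f x' - g y) 0 := le_max_left _ _
  · rw [S.hint₁ x' hx', S.hint₁ x hx]
  · rintro y ⟨⟨hy, hpos⟩, hne⟩
    have hmem : y ∈ secX f g a₁ b₁ x := ⟨hy, le_of_lt hpos⟩
    have hyge : ym < y := lt_of_le_of_ne (ym_le hmem) (by simpa using fun h => hne h.symm)
    refine ⟨hy, ?_⟩
    show max (x * y - f x - g y) 0 < max (x' * y - f x' - g y) 0
    have : x * y - f x - g y < x' * y - f x' - g y := by nlinarith
    calc max (x * y - f x - g y) 0 = x * y - f x - g y := max_eq_left (le_of_lt hpos)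
      _ < x' * y - f x' - g y := this
      _ ≤ max (x' * y - f x' - g y) 0 := le_max_left _ _
  · rw [measure_diff_null (S.hac₁ (Real.volume_singleton))]
    exact posmeas₁ S hx

lemma yM_mono (S : Setup μ₀ μ₁ a₀ b₀ a₁ b₁ ε f g) :
    MonotoneOn (fun x => sSup (secX f g a₁ b₁ x)) (Icc a₀ b₀) := by
  intro x hx x' hx' hle
  rcases eq_or_lt_of_le hle with rfl | hlt
  · exact le_refl _
  rcases le_or_gt (f x' - f x) ((x' - x) * sSup (secX f g a₁ b₁ x)) with hc | hc
  · obtain ⟨hyI, hypos⟩ := yM_mem S hx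
    have : 0 ≤ x' * sSup (secX f g a₁ b₁ x) - f x' - g (sSup (secX f g a₁ b₁ x)) := by
      nlinarith
    exact le_yM ⟨hyI, this⟩
  · have h2 := slope_lt S hx hx' hlt
    have : (x' - x) * sSup (secX f g a₁ b₁ x) < (x' - x) * sSup (secX f g a₁ b₁ x') := by
      linarith
    exact le_of_lt ((mul_lt_mul_iff_right₀ (by linarith)).1 this)

lemma ym_mono (S : Setup μ₀ μ₁ a₀ b₀ a₁ b₁ ε f g) :
    MonotoneOn (fun x => sInf (secX f g a₁ b₁ x)) (Icc a₀ b₀) := by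
  intro x hx x' hx' hle
  rcases eq_or_lt_of_le hle with rfl | hlt
  · exact le_refl _
  rcases le_or_gt ((x' - x) * sInf (secX f g a₁ b₁ x')) (f x' - f x) with hc | hc
  · obtain ⟨hyI, hypos⟩ := ym_mem S hx'
    have : 0 ≤ x * sInf (secX f g a₁ b₁ x') - f x - g (sInf (secX f g a₁ b₁ x')) := by
      nlinarith
    exact ym_le ⟨hyI, this⟩
  · have h2 := slope_gt S hx hx' hlt
    have : (x' - x) * sInf (secX f g a₁ b₁ x) < (x' - x) * sInf (secX f g a₁ b₁ x') := by
      linarith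
    exact le_of_lt ((mul_lt_mul_iff_right₀ (by linarith)).1 this)

end QROTAux

namespace QROTAux

variable {μ₀ μ₁ : Measure ℝ} {a₀ b₀ a₁ b₁ ε : ℝ} {f g : ℝ → ℝ}

lemma cont_nonpos_left {φ : ℝ → ℝ} {A B c : ℝ} (hφ : ContinuousOn φ (Icc A B))
    (hc : c ∈ Icc A B) (hAc : A < c) (h : ∀ x ∈ Icc A B, x < c → φ x < 0) : φ c ≤ 0 := by
  have hne : (𝓝[Ioo A c] c).NeBot := by
    rw [← mem_closure_iff_nhdsWithin_neBot, closure_Ioo (ne_of_lt hAc)]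
    exact ⟨le_of_lt hAc, le_refl c⟩
  have hsub : Ioo A c ⊆ Icc A B := fun x hx =>
    ⟨le_of_lt hx.1, le_trans (le_of_lt hx.2) hc.2⟩
  have htend : Filter.Tendsto φ (𝓝[Ioo A c] c) (𝓝 (φ c)) :=
    ((hφ c hc).mono hsub)
  exact le_of_tendsto htend (eventually_nhdsWithin_of_forall
    (fun x hx => le_of_lt (h x (hsub hx) hx.2)))

lemma cont_nonpos_right {φ : ℝ → ℝ} {A B c : ℝ} (hφ : ContinuousOn φ (Icc A B))
    (hc : c ∈ Icc A B) (hcB : c < B) (h : ∀ x ∈ Icc A B, c < x → φ x < 0) : φ c ≤ 0 := by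
  have hne : (𝓝[Ioo c B] c).NeBot := by
    rw [← mem_closure_iff_nhdsWithin_neBot, closure_Ioo (ne_of_lt hcB)]
    exact ⟨le_refl c, le_of_lt hcB⟩
  have hsub : Ioo c B ⊆ Icc A B := fun x hx =>
    ⟨le_trans hc.1 (le_of_lt hx.1), le_of_lt hx.2⟩
  have htend : Filter.Tendsto φ (𝓝[Ioo c B] c) (𝓝 (φ c)) :=
    ((hφ c hc).mono hsub)
  exact le_of_tendsto htend (eventually_nhdsWithin_of_forall
    (fun x hx => le_of_lt (h x (hsub hx) hx.1)))

lemma exists_right_pos {φ : ℝ → ℝ} {A B Y : ℝ} (hφ : ContinuousOn φ (Icc A B))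
    (hY : Y ∈ Icc A B) (hYB : Y < B) (hpos : 0 < φ Y) :
    ∃ y, Y < y ∧ y ∈ Icc A B ∧ 0 < φ y := by
  have hne : (𝓝[Ioo Y B] Y).NeBot := by
    rw [← mem_closure_iff_nhdsWithin_neBot, closure_Ioo (ne_of_lt hYB)]
    exact ⟨le_refl Y, le_of_lt hYB⟩
  have hsub : Ioo Y B ⊆ Icc A B := fun x hx =>
    ⟨le_trans hY.1 (le_of_lt hx.1), le_of_lt hx.2⟩
  have htend : Filter.Tendsto φ (𝓝[Ioo Y B] Y) (𝓝 (φ Y)) := ((hφ Y hY).mono hsub)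
  have h1 : ∀ᶠ y in 𝓝[Ioo Y B] Y, 0 < φ y := htend.eventually (lt_mem_nhds hpos)
  have h2 : ∀ᶠ y in 𝓝[Ioo Y B] Y, y ∈ Ioo Y B := eventually_mem_nhdsWithin
  obtain ⟨y, hy1, hy2⟩ := (h1.and h2).exists
  exact ⟨y, hy2.1, hsub hy2, hy1⟩

lemma exists_left_pos {φ : ℝ → ℝ} {A B Y : ℝ} (hφ : ContinuousOn φ (Icc A B))
    (hY : Y ∈ Icc A B) (hAY : A < Y) (hpos : 0 < φ Y) :
    ∃ y, y < Y ∧ y ∈ Icc A B ∧ 0 < φ y := by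
  have hne : (𝓝[Ioo A Y] Y).NeBot := by
    rw [← mem_closure_iff_nhdsWithin_neBot, closure_Ioo (ne_of_lt hAY)]
    exact ⟨le_of_lt hAY, le_refl Y⟩
  have hsub : Ioo A Y ⊆ Icc A B := fun x hx =>
    ⟨le_of_lt hx.1, le_trans (le_of_lt hx.2) hY.2⟩
  have htend : Filter.Tendsto φ (𝓝[Ioo A Y] Y) (𝓝 (φ Y)) := ((hφ Y hY).mono hsub)
  have h1 : ∀ᶠ y in 𝓝[Ioo A Y] Y, 0 < φ y := htend.eventually (lt_mem_nhds hpos)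
  have h2 : ∀ᶠ y in 𝓝[Ioo A Y] Y, y ∈ Ioo A Y := eventually_mem_nhdsWithin
  obtain ⟨y, hy1, hy2⟩ := (h1.and h2).exists
  exact ⟨y, hy2.2, hsub hy2, hy1⟩

lemma exists_pos_ne_top (S : Setup μ₀ μ₁ a₀ b₀ a₁ b₁ ε f g) :
    ∃ x ∈ Icc a₀ b₀, x ≠ b₀ ∧ 0 < x * b₁ - f x - g b₁ := by
  have hb₁ : b₁ ∈ Icc a₁ b₁ := ⟨le_of_lt S.hab₁, le_refl _⟩
  have hpos := posmeas₀ S hb₁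
  by_contra hcon
  push_neg at hcon
  apply hpos
  have hsub : {x ∈ Icc a₀ b₀ | 0 < x * b₁ - f x - g b₁} ⊆ {b₀} := by
    rintro x ⟨hx1, hx2⟩
    simp only [Set.mem_singleton_iff]
    by_contra hne
    exact absurd hx2 (not_lt.2 (hcon x hx1 hne))
  refine measure_mono_null hsub (S.hac₀ Real.volume_singleton)

lemma exists_pos_ne_bot (S : Setup μ₀ μ₁ a₀ b₀ a₁ b₁ ε f g) :
    ∃ x ∈ Icc a₀ b₀, x ≠ a₀ ∧ 0 < x * a₁ - f x - g a₁ := by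
  have ha₁ : a₁ ∈ Icc a₁ b₁ := ⟨le_refl _, le_of_lt S.hab₁⟩
  have hpos := posmeas₀ S ha₁
  by_contra hcon
  push_neg at hcon
  apply hpos
  have hsub : {x ∈ Icc a₀ b₀ | 0 < x * a₁ - f x - g a₁} ⊆ {a₀} := by
    rintro x ⟨hx1, hx2⟩
    simp only [Set.mem_singleton_iff]
    by_contra hne
    exact absurd hx2 (not_lt.2 (hcon x hx1 hne))
  refine measure_mono_null hsub (S.hac₀ Real.volume_singleton)

lemma ym_a₀_eq (S : Setup μ₀ μ₁ a₀ b₀ a₁ b₁ ε f g) : sInf (secX f g a₁ b₁ a₀) = a₁ := by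
  obtain ⟨x, hx, -, hpos⟩ := exists_pos_ne_bot S
  have ha₁mem : a₁ ∈ secX f g a₁ b₁ x := ⟨⟨le_refl _, le_of_lt S.hab₁⟩, le_of_lt hpos⟩
  have h1 : sInf (secX f g a₁ b₁ x) = a₁ :=
    le_antisymm (ym_le ha₁mem) (ym_mem S hx).1.1
  have ha₀ : a₀ ∈ Icc a₀ b₀ := ⟨le_refl _, le_of_lt S.hab₀⟩
  have h2 := ym_mono S ha₀ hx hx.1
  exact le_antisymm (by simpa [h1] using h2) (ym_mem S ha₀).1.1

lemma yM_b₀_eq (S : Setup μ₀ μ₁ a₀ b₀ a₁ b₁ ε f g) : sSup (secX f g a₁ b₁ b₀) = b₁ := by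
  obtain ⟨x, hx, -, hpos⟩ := exists_pos_ne_top S
  have hb₁mem : b₁ ∈ secX f g a₁ b₁ x := ⟨⟨le_of_lt S.hab₁, le_refl _⟩, le_of_lt hpos⟩
  have h1 : sSup (secX f g a₁ b₁ x) = b₁ :=
    le_antisymm (yM_mem S hx).1.2 (le_yM hb₁mem)
  have hb₀ : b₀ ∈ Icc a₀ b₀ := ⟨le_of_lt S.hab₀, le_refl _⟩
  have h2 := yM_mono S hx hb₀ hx.2
  exact le_antisymm (yM_mem S hb₀).1.2 (by simpa [h1] using h2)

lemma width_le (S : Setup μ₀ μ₁ a₀ b₀ a₁ b₁ ε f g)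
    (hsmall : ∀ x ∈ Icc a₀ b₀, (volume (secX f g a₁ b₁ x)).toReal ≤ (b₁ - a₁) / 3)
    {x : ℝ} (hx : x ∈ Icc a₀ b₀) :
    sSup (secX f g a₁ b₁ x) - sInf (secX f g a₁ b₁ x) ≤ (b₁ - a₁) / 3 := by
  have h := hsmall x hx
  rw [secX_eq_Icc S hx, Real.volume_Icc, ENNReal.toReal_ofReal
    (by linarith [ym_le (yM_mem S hx)] : (0:ℝ) ≤ _)] at h
  exact h

end QROTAux


theorem stmt2
    (a₀ b₀ a₁ b₁ lam Lam : ℝ) (μ₀ μ₁ : Measure ℝ) (u₀ u₁ : ℝ → ℝ)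
    (hab₀ : a₀ < b₀) (hab₁ : a₁ < b₁) (hlam : 0 < lam)
    (hμ₀ : IsGoodMarginal μ₀ u₀ a₀ b₀ lam Lam)
    (hμ₁ : IsGoodMarginal μ₁ u₁ a₁ b₁ lam Lam)
    (ε : ℝ) (hε : 0 < ε) (f g : ℝ → ℝ)
    (hfg : IsPotentialPair μ₀ μ₁ a₀ b₀ a₁ b₁ ε f g)
    (hsmall : ∀ x ∈ Icc a₀ b₀, (volume (secX f g a₁ b₁ x)).toReal ≤ (b₁ - a₁) / 3) :
    ∃ xM ∈ Ioo a₀ b₀, ∃ xm ∈ Ioo a₀ b₀,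
      (yMF f g a₁ b₁ xM = b₁ ∧ xM * b₁ - f xM - g b₁ = 0) ∧
      (∀ x ∈ Ioo a₀ b₀, yMF f g a₁ b₁ x = b₁ → x * b₁ - f x - g b₁ = 0 → x = xM) ∧
      (ymF f g a₁ b₁ xm = a₁ ∧ xm * a₁ - f xm - g a₁ = 0) ∧
      (∀ x ∈ Ioo a₀ b₀, ymF f g a₁ b₁ x = a₁ → x * a₁ - f x - g a₁ = 0 → x = xm) ∧
      MonotoneOn (ymF f g a₁ b₁) (Icc a₀ b₀) ∧
      MonotoneOn (yMF f g a₁ b₁) (Icc a₀ b₀) ∧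
      (∀ x ∈ Icc a₀ xm, ymF f g a₁ b₁ x = a₁) ∧
      StrictMonoOn (ymF f g a₁ b₁) (Ioc xm b₀) ∧
      (∀ x ∈ Icc xM b₀, yMF f g a₁ b₁ x = b₁) ∧
      StrictMonoOn (yMF f g a₁ b₁) (Ico a₀ xM) := by
  classical
  obtain ⟨⟨K₀, hlip₀⟩, ⟨K₁, hlip₁⟩, hI₁, hI₀⟩ := hfg
  haveI := hμ₀.1
  haveI := hμ₁.1
  have hfin₀ : IsFiniteMeasure μ₀ := inferInstance
  have hfin₁ : IsFiniteMeasure μ₁ := inferInstance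
  have S : QROTAux.Setup μ₀ μ₁ a₀ b₀ a₁ b₁ ε f g := by
    refine ⟨hab₀, hab₁, hε, hlip₀.continuousOn, hlip₁.continuousOn, ?_, ?_, hfin₀, hfin₁, hI₁, hI₀⟩
    · rw [hμ₀.2.1]
      exact (withDensity_absolutelyContinuous _ _).trans
        (Measure.absolutelyContinuous_of_le Measure.restrict_le_self)
    · rw [hμ₁.2.1]
      exact (withDensity_absolutelyContinuous _ _).trans
        (Measure.absolutelyContinuous_of_le Measure.restrict_le_self)
  -- the up-set for b₁ and the down-set for a₁
  set BM : Set ℝ := {x ∈ Icc a₀ b₀ | 0 ≤ x * b₁ - f x - g b₁} with hBM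
  set Bm : Set ℝ := {x ∈ Icc a₀ b₀ | 0 ≤ x * a₁ - f x - g a₁} with hBm
  have hBMclosed : IsClosed BM := by
    have : BM = Icc a₀ b₀ ∩ (fun x => x * b₁ - f x - g b₁) ⁻¹' Ici 0 := by
      ext x; simp [hBM, Set.mem_sep_iff]
    rw [this]
    exact (QROTAux.xicont₀ S b₁).preimage_isClosed_of_isClosed isClosed_Icc isClosed_Ici
  have hBmclosed : IsClosed Bm := by
    have : Bm = Icc a₀ b₀ ∩ (fun x => x * a₁ - f x - g a₁) ⁻¹' Ici 0 := by
      ext x; simp [hBm, Set.mem_sep_iff]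
    rw [this]
    exact (QROTAux.xicont₀ S a₁).preimage_isClosed_of_isClosed isClosed_Icc isClosed_Ici
  obtain ⟨xs, hxs, hxsne, hxspos⟩ := QROTAux.exists_pos_ne_top S
  obtain ⟨xi, hxi, hxine, hxipos⟩ := QROTAux.exists_pos_ne_bot S
  have hBMne : BM.Nonempty := ⟨xs, hxs, le_of_lt hxspos⟩
  have hBmne : Bm.Nonempty := ⟨xi, hxi, le_of_lt hxipos⟩
  have hBMsub : BM ⊆ Icc a₀ b₀ := fun x hx => hx.1
  have hBmsub : Bm ⊆ Icc a₀ b₀ := fun x hx => hx.1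
  set xM := sInf BM with hxMdef
  set xm := sSup Bm with hxmdef
  have hxMmem : xM ∈ BM := hBMclosed.csInf_mem hBMne (BddBelow.mono hBMsub bddBelow_Icc)
  have hxmmem : xm ∈ Bm := hBmclosed.csSup_mem hBmne (BddAbove.mono hBmsub bddAbove_Icc)
  have hxMIcc : xM ∈ Icc a₀ b₀ := hxMmem.1
  have hxmIcc : xm ∈ Icc a₀ b₀ := hxmmem.1
  have ha₀Icc : a₀ ∈ Icc a₀ b₀ := ⟨le_refl _, le_of_lt hab₀⟩
  have hb₀Icc : b₀ ∈ Icc a₀ b₀ := ⟨le_of_lt hab₀, le_refl _⟩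
  have hb₁Icc : b₁ ∈ Icc a₁ b₁ := ⟨le_of_lt hab₁, le_refl _⟩
  have ha₁Icc : a₁ ∈ Icc a₁ b₁ := ⟨le_refl _, le_of_lt hab₁⟩
  -- y_M(x) = b₁ exactly on members of BM
  have hyMofBM : ∀ x ∈ BM, sSup (secX f g a₁ b₁ x) = b₁ := by
    rintro x ⟨hx, hξ⟩
    exact le_antisymm (QROTAux.yM_mem S hx).1.2 (QROTAux.le_yM ⟨hb₁Icc, hξ⟩)
  have hymofBm : ∀ x ∈ Bm, sInf (secX f g a₁ b₁ x) = a₁ := by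
    rintro x ⟨hx, hξ⟩
    exact le_antisymm (QROTAux.ym_le ⟨ha₁Icc, hξ⟩) (QROTAux.ym_mem S hx).1.1
  -- BM is an up-set, Bm is a down-set (within Icc a₀ b₀)
  have hBMup : ∀ x ∈ Icc a₀ b₀, xM ≤ x → x ∈ BM := by
    intro x hx hle
    have h1 : sSup (secX f g a₁ b₁ x) = b₁ := by
      have := QROTAux.yM_mono S hxMIcc hx hle
      simp only [hyMofBM xM hxMmem] at this
      exact le_antisymm (QROTAux.yM_mem S hx).1.2 this
    have := QROTAux.yM_mem S hx
    rw [h1] at this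
    exact ⟨hx, this.2⟩
  have hBmdown : ∀ x ∈ Icc a₀ b₀, x ≤ xm → x ∈ Bm := by
    intro x hx hle
    have h1 : sInf (secX f g a₁ b₁ x) = a₁ := by
      have := QROTAux.ym_mono S hx hxmIcc hle
      simp only [hymofBm xm hxmmem] at this
      exact le_antisymm this (QROTAux.ym_mem S hx).1.1
    have := QROTAux.ym_mem S hx
    rw [h1] at this
    exact ⟨hx, this.2⟩
  have hnotBM : ∀ x ∈ Icc a₀ b₀, x < xM → x * b₁ - f x - g b₁ < 0 := by
    intro x hx hlt
    by_contra hcon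
    push_neg at hcon
    exact absurd (csInf_le (BddBelow.mono hBMsub bddBelow_Icc) (⟨hx, hcon⟩ : x ∈ BM))
      (not_le.2 hlt)
  have hnotBm : ∀ x ∈ Icc a₀ b₀, xm < x → x * a₁ - f x - g a₁ < 0 := by
    intro x hx hlt
    by_contra hcon
    push_neg at hcon
    exact absurd (le_csSup (BddAbove.mono hBmsub bddAbove_Icc) (⟨hx, hcon⟩ : x ∈ Bm))
      (not_le.2 hlt)
  -- strict inclusion bounds: xM and xm lie in the open interval
  have hxMltb₀ : xM < b₀ := lt_of_le_of_lt
    (csInf_le (BddBelow.mono hBMsub bddBelow_Icc) (⟨hxs, le_of_lt hxspos⟩ : xs ∈ BM))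
    (lt_of_le_of_ne hxs.2 hxsne)
  have ha₀ltxm : a₀ < xm := lt_of_lt_of_le
    (lt_of_le_of_ne hxi.1 (Ne.symm hxine))
    (le_csSup (BddAbove.mono hBmsub bddAbove_Icc) (⟨hxi, le_of_lt hxipos⟩ : xi ∈ Bm))
  have ha₀ltxM : a₀ < xM := by
    rcases lt_or_eq_of_le hxMIcc.1 with h | h
    · exact h
    · exfalso
      have h1 : sSup (secX f g a₁ b₁ a₀) = b₁ := by rw [h]; exact hyMofBM xM hxMmem
      have h2 : sInf (secX f g a₁ b₁ a₀) = a₁ := QROTAux.ym_a₀_eq S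
      have := QROTAux.width_le S hsmall ha₀Icc
      rw [h1, h2] at this
      linarith
  have hxmltb₀ : xm < b₀ := by
    rcases lt_or_eq_of_le hxmIcc.2 with h | h
    · exact h
    · exfalso
      have h1 : sInf (secX f g a₁ b₁ b₀) = a₁ := by rw [← h]; exact hymofBm xm hxmmem
      have h2 : sSup (secX f g a₁ b₁ b₀) = b₁ := QROTAux.yM_b₀_eq S
      have := QROTAux.width_le S hsmall hb₀Icc
      rw [h1, h2] at this
      linarith
  -- the defining equations at xM and xm
  have hξxM : xM * b₁ - f xM - g b₁ = 0 := by
    refine le_antisymm ?_ hxMmem.2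
    have := QROTAux.cont_nonpos_left (φ := fun x => x * b₁ - f x - g b₁)
      (QROTAux.xicont₀ S b₁) hxMIcc ha₀ltxM hnotBM
    simpa using this
  have hξxm : xm * a₁ - f xm - g a₁ = 0 := by
    refine le_antisymm ?_ hxmmem.2
    have := QROTAux.cont_nonpos_right (φ := fun x => x * a₁ - f x - g a₁)
      (QROTAux.xicont₀ S a₁) hxmIcc hxmltb₀ hnotBm
    simpa using this
  refine ⟨xM, ⟨ha₀ltxM, hxMltb₀⟩, xm, ⟨ha₀ltxm, hxmltb₀⟩,
    ⟨hyMofBM xM hxMmem, hξxM⟩, ?_, ⟨hymofBm xm hxmmem, hξxm⟩, ?_,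
    QROTAux.ym_mono S, QROTAux.yM_mono S, ?_, ?_, ?_, ?_⟩
  · -- uniqueness of xM
    intro x hx hyM hξ
    have hxIcc : x ∈ Icc a₀ b₀ := ⟨le_of_lt hx.1, le_of_lt hx.2⟩
    have hxmemBM : x ∈ BM := ⟨hxIcc, le_of_eq hξ.symm⟩
    have h1 : xM ≤ x := csInf_le (BddBelow.mono hBMsub bddBelow_Icc) hxmemBM
    rcases lt_or_eq_of_le h1 with hlt | heq
    · exfalso
      have hs := QROTAux.slope_lt S hxMIcc hxIcc hlt
      rw [show yMF f g a₁ b₁ x = sSup (secX f g a₁ b₁ x) from rfl] at hyM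
      rw [hyM] at hs
      have e : x * b₁ - xM * b₁ = (x - xM) * b₁ := by ring
      linarith
    · exact heq.symm
  · -- uniqueness of xm
    intro x hx hym hξ
    have hxIcc : x ∈ Icc a₀ b₀ := ⟨le_of_lt hx.1, le_of_lt hx.2⟩
    have hxmemBm : x ∈ Bm := ⟨hxIcc, le_of_eq hξ.symm⟩
    have h1 : x ≤ xm := le_csSup (BddAbove.mono hBmsub bddAbove_Icc) hxmemBm
    rcases lt_or_eq_of_le h1 with hlt | heq
    · exfalso
      have hs := QROTAux.slope_gt S hxIcc hxmIcc hlt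
      rw [show ymF f g a₁ b₁ x = sInf (secX f g a₁ b₁ x) from rfl] at hym
      rw [hym] at hs
      have e : xm * a₁ - x * a₁ = (xm - x) * a₁ := by ring
      linarith
    · exact heq
  · -- y_m ≡ a₁ on [a₀, xm]
    intro x hx
    have hxIcc : x ∈ Icc a₀ b₀ := ⟨hx.1, le_trans hx.2 hxmIcc.2⟩
    exact hymofBm x (hBmdown x hxIcc hx.2)
  · -- strict monotonicity of y_m on (xm, b₀]
    intro x hx x' hx' hlt
    have hxIcc : x ∈ Icc a₀ b₀ := ⟨le_of_lt (lt_trans ha₀ltxm hx.1), hx.2⟩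
    have hx'Icc : x' ∈ Icc a₀ b₀ := ⟨le_of_lt (lt_trans ha₀ltxm hx'.1), hx'.2⟩
    have hle := QROTAux.ym_mono S hxIcc hx'Icc (le_of_lt hlt)
    rcases lt_or_eq_of_le hle with h | hEq
    · exact h
    · exfalso
      set Y := sInf (secX f g a₁ b₁ x) with hY
      have hYmem : Y ∈ secX f g a₁ b₁ x := QROTAux.ym_mem S hxIcc
      have hY'mem : Y ∈ secX f g a₁ b₁ x' := by
        rw [show Y = sInf (secX f g a₁ b₁ x') from hEq]
        exact QROTAux.ym_mem S hx'Icc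
      have hξxneg : x * a₁ - f x - g a₁ < 0 := hnotBm x hxIcc hx.1
      have ha₁ltY : a₁ < Y := by
        rcases lt_or_eq_of_le hYmem.1.1 with h | h
        · exact h
        · exfalso; rw [← h] at hYmem; linarith [hYmem.2]
      have hs := QROTAux.slope_gt S hxIcc hx'Icc hlt
      rw [← hY] at hs
      have hξxY : 0 < x * Y - f x - g Y := by
        have e : x' * Y - x * Y = (x' - x) * Y := by ring
        linarith [hY'mem.2]
      obtain ⟨y, hyY, hyIcc, hypos⟩ := QROTAux.exists_left_pos (QROTAux.xicont₁ S x)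
        hYmem.1 ha₁ltY hξxY
      have : Y ≤ y := QROTAux.ym_le ⟨hyIcc, le_of_lt hypos⟩
      linarith
  · -- y_M ≡ b₁ on [xM, b₀]
    intro x hx
    have hxIcc : x ∈ Icc a₀ b₀ := ⟨le_trans hxMIcc.1 hx.1, hx.2⟩
    exact hyMofBM x (hBMup x hxIcc hx.1)
  · -- strict monotonicity of y_M on [a₀, xM)
    intro x hx x' hx' hlt
    have hxIcc : x ∈ Icc a₀ b₀ := ⟨hx.1, le_of_lt (lt_trans hx.2 hxMltb₀)⟩
    have hx'Icc : x' ∈ Icc a₀ b₀ := ⟨hx'.1, le_of_lt (lt_trans hx'.2 hxMltb₀)⟩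
    have hle := QROTAux.yM_mono S hxIcc hx'Icc (le_of_lt hlt)
    rcases lt_or_eq_of_le hle with h | hEq
    · exact h
    · exfalso
      set Y := sSup (secX f g a₁ b₁ x') with hY
      have hY'mem : Y ∈ secX f g a₁ b₁ x' := QROTAux.yM_mem S hx'Icc
      have hYmem : Y ∈ secX f g a₁ b₁ x := by
        rw [show Y = sSup (secX f g a₁ b₁ x) from hEq.symm]
        exact QROTAux.yM_mem S hxIcc
      have hξx'neg : x' * b₁ - f x' - g b₁ < 0 := hnotBM x' hx'Icc hx'.2
      have hYltb₁ : Y < b₁ := by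
        rcases lt_or_eq_of_le hY'mem.1.2 with h | h
        · exact h
        · exfalso; rw [h] at hY'mem; linarith [hY'mem.2]
      have hs := QROTAux.slope_lt S hxIcc hx'Icc hlt
      rw [← hY] at hs
      have hξx'Y : 0 < x' * Y - f x' - g Y := by
        have e : x' * Y - x * Y = (x' - x) * Y := by ring
        linarith [hYmem.2]
      obtain ⟨y, hyY, hyIcc, hypos⟩ := QROTAux.exists_right_pos (QROTAux.xicont₁ S x')
        hY'mem.1 hYltb₁ hξx'Y
      have : y ≤ Y := QROTAux.le_yM ⟨hyIcc, le_of_lt hypos⟩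
      linarith
end
end

section
/- Let ε > 0 and let (f, g) be a pair of ε-potentials such that sup_{x ∈ Ω₀} |S_x| ≤ (b₁ − a₁)/3. For every x ∈ Ω₀ with ξ(x, a₁) < 0 (equivalently y_m(x) > a₁), the function y_m is differentiable at x with y_m'(x) = (f'(x) − y_m(x))/(x − g'(y_m(x))), and y_m'(x) > 0 because y_m(x) < f'(x) and g'(y_m(x)) < x. Symmetrically, for every x ∈ Ω₀ with ξ(x, b₁) < 0 (equivalently y_M(x) < b₁), the function y_M is differentiable at x with y_M'(x) = (f'(x) − y_M(x))/(x − g'(y_M(x))) > 0. -/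
open MeasureTheory Set
open scoped Classical ENNReal

noncomputable section

namespace GM

variable {μ : Measure ℝ} {u : ℝ → ℝ} {a b lam Lam : ℝ}

lemma apply (h : IsGoodMarginal μ u a b lam Lam) {A : Set ℝ} (hA : MeasurableSet A) :
    μ A = ∫⁻ t in A ∩ Icc a b, ENNReal.ofReal (u t) := by
  rw [h.2.1, withDensity_apply _ hA, Measure.restrict_restrict hA]

lemma null (h : IsGoodMarginal μ u a b lam Lam) {A : Set ℝ} (hA : MeasurableSet A)
    (hv : volume (A ∩ Icc a b) = 0) : μ A = 0 := by
  rw [apply h hA]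
  exact setLIntegral_measure_zero _ _ hv

lemma singleton (h : IsGoodMarginal μ u a b lam Lam) (t : ℝ) : μ {t} = 0 := by
  refine null h (measurableSet_singleton t) (measure_mono_null inter_subset_left ?_)
  exact measure_singleton t

lemma noAtoms (h : IsGoodMarginal μ u a b lam Lam) : NoAtoms μ :=
  ⟨fun t => singleton h t⟩

lemma pos_Ioo (h : IsGoodMarginal μ u a b lam Lam) (hlam : 0 < lam) {c d : ℝ}
    (hcd : c < d) (hsub : Ioo c d ⊆ Icc a b) : 0 < μ (Ioo c d) := by
  rw [apply h measurableSet_Ioo, inter_eq_self_of_subset_left hsub]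
  calc (0:ℝ≥0∞) < ENNReal.ofReal lam * volume (Ioo c d) := by
        rw [Real.volume_Ioo]
        exact ENNReal.mul_pos (by simpa using hlam) (by simp [hcd])
    _ = ∫⁻ _ in Ioo c d, ENNReal.ofReal lam := by rw [setLIntegral_const, mul_comm]
    _ ≤ ∫⁻ t in Ioo c d, ENNReal.ofReal (u t) := by
        have hm : AEMeasurable (fun t => ENNReal.ofReal (u t)) (volume.restrict (Ioo c d)) :=
          ENNReal.measurable_ofReal.comp_aemeasurable
            (((h.2.2.1.mono hsub).aemeasurable measurableSet_Ioo))
        refine setLIntegral_mono_ae hm ?_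
        filter_upwards [] with t ht
        exact ENNReal.ofReal_le_ofReal (h.2.2.2 t (hsub ht)).1

lemma finite (h : IsGoodMarginal μ u a b lam Lam) (A : Set ℝ) : μ A ≠ ∞ := by
  haveI := h.1
  exact measure_ne_top μ A

lemma integrableOn (h : IsGoodMarginal μ u a b lam Lam) {v : ℝ → ℝ}
    (hv : ContinuousOn v (Icc a b)) {A : Set ℝ} (hA : A ⊆ Icc a b) :
    IntegrableOn v A μ := by
  haveI := h.1
  exact (hv.integrableOn_compact isCompact_Icc).mono_set hA

lemma toReal_apply (h : IsGoodMarginal μ u a b lam Lam) (hlam : 0 < lam)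
    {A : Set ℝ} (hA : MeasurableSet A) :
    (μ A).toReal = ∫ t in A ∩ Icc a b, u t := by
  have hsub : A ∩ Icc a b ⊆ Icc a b := inter_subset_right
  have hint : IntegrableOn u (A ∩ Icc a b) volume :=
    ((h.2.2.1.integrableOn_compact isCompact_Icc).mono_set hsub)
  have hnn : 0 ≤ᶠ[ae (volume.restrict (A ∩ Icc a b))] u := by
    refine ae_restrict_of_forall_mem (hA.inter measurableSet_Icc) ?_
    intro t ht
    exact le_trans hlam.le (h.2.2.2 t ht.2).1
  rw [apply h hA, ← ofReal_integral_eq_lintegral_ofReal hint hnn,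
    ENNReal.toReal_ofReal (integral_nonneg_of_ae hnn)]

lemma setIntegral (h : IsGoodMarginal μ u a b lam Lam) (hlam : 0 < lam)
    {A : Set ℝ} (hA : MeasurableSet A) (hAs : A ⊆ Icc a b) (v : ℝ → ℝ) :
    ∫ t in A, v t ∂μ = ∫ t in A, u t * v t := by
  have hu : AEMeasurable (fun t => (u t).toNNReal) (volume.restrict (Icc a b)) :=
    measurable_real_toNNReal.comp_aemeasurable (h.2.2.1.aemeasurable measurableSet_Icc)
  have : μ = (volume.restrict (Icc a b)).withDensity (fun t => ((u t).toNNReal : ℝ≥0∞)) := by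
    rw [h.2.1]; rfl
  rw [this, setIntegral_withDensity_eq_setIntegral_smul₀ hu.restrict v hA,
    Measure.restrict_restrict hA, inter_eq_self_of_subset_left hAs]
  refine setIntegral_congr_fun hA fun t ht => ?_
  have : 0 ≤ u t := le_trans hlam.le (h.2.2.2 t (hAs ht)).1
  simp [NNReal.smul_def, Real.coe_toNNReal _ this]

end GM

namespace SX

variable {a₀ b₀ a₁ b₁ lam Lam ε : ℝ} {μ₀ μ₁ : Measure ℝ} {u₀ u₁ : ℝ → ℝ} {f g : ℝ → ℝ}

/-- symmetry: `secY` is a `secX` with roles swapped. -/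
lemma secY_eq (f g : ℝ → ℝ) (a₀ b₀ y : ℝ) : secY f g a₀ b₀ y = secX g f a₀ b₀ y := by
  ext x
  simp only [secY, secX, mem_setOf_eq, mem_sep_iff]
  constructor <;> rintro ⟨h1, h2⟩ <;> exact ⟨h1, by linarith [h2, mul_comm x y]⟩

lemma Gmap_eq (μ₀ : Measure ℝ) (f g : ℝ → ℝ) (a₀ b₀ : ℝ) :
    Gmap μ₀ f g a₀ b₀ = Tmap μ₀ g f a₀ b₀ := by
  funext y; unfold Gmap Tmap; rw [secY_eq]

lemma pair_swap (h : IsPotentialPair μ₀ μ₁ a₀ b₀ a₁ b₁ ε f g) :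
    IsPotentialPair μ₁ μ₀ a₁ b₁ a₀ b₀ ε g f := by
  obtain ⟨h1, h2, h3, h4⟩ := h
  refine ⟨h2, h1, ?_, ?_⟩
  · intro y hy
    rw [← h4 y hy]
    refine setIntegral_congr_fun measurableSet_Icc fun x _ => ?_
    ring_nf
  · intro x hx
    rw [← h3 x hx]
    refine setIntegral_congr_fun measurableSet_Icc fun y _ => ?_
    ring_nf

lemma subset (x : ℝ) : secX f g a₁ b₁ x ⊆ Icc a₁ b₁ := fun _ hy => hy.1

lemma isClosed (hg : ContinuousOn g (Icc a₁ b₁)) (x : ℝ) : IsClosed (secX f g a₁ b₁ x) := by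
  have hc : ContinuousOn (fun y => x * y - f x - g y) (Icc a₁ b₁) :=
    (Continuous.continuousOn (by continuity)).sub hg
  have : secX f g a₁ b₁ x = Icc a₁ b₁ ∩ (fun y => x * y - f x - g y) ⁻¹' (Ici 0) := by
    ext y; simp [secX, mem_preimage]
  rw [this]
  exact hc.preimage_isClosed_of_isClosed isClosed_Icc isClosed_Ici

lemma isCompact (hg : ContinuousOn g (Icc a₁ b₁)) (x : ℝ) : IsCompact (secX f g a₁ b₁ x) :=
  isCompact_Icc.of_isClosed_subset (isClosed hg x) (subset x)

lemma measurableSet (hg : ContinuousOn g (Icc a₁ b₁)) (x : ℝ) :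
    MeasurableSet (secX f g a₁ b₁ x) := (isClosed hg x).measurableSet

/-- positivity of the measure of the section. -/
lemma measure_pos (hμ₁ : IsGoodMarginal μ₁ u₁ a₁ b₁ lam Lam) (hε : 0 < ε)
    (hg : ContinuousOn g (Icc a₁ b₁))
    (hE : ∫ y in Icc a₁ b₁, max (x * y - f x - g y) 0 ∂μ₁ = ε) :
    0 < μ₁ (secX f g a₁ b₁ x) := by
  by_contra hc
  push_neg at hc
  have h0 : μ₁ (secX f g a₁ b₁ x) = 0 := le_antisymm hc zero_le
  have hae : ∀ᵐ y ∂(μ₁.restrict (Icc a₁ b₁)), max (x * y - f x - g y) 0 = 0 := by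
    rw [ae_restrict_iff' measurableSet_Icc]
    have : {y | ¬ (y ∈ Icc a₁ b₁ → max (x * y - f x - g y) 0 = 0)} ⊆ secX f g a₁ b₁ x := by
      intro y hy
      rw [mem_setOf_eq, Classical.not_imp] at hy
      refine ⟨hy.1, ?_⟩
      rcases le_or_gt (x * y - f x - g y) 0 with h | h
      · exact absurd (max_eq_right h) hy.2
      · exact h.le
    exact (ae_iff).2 (measure_mono_null this h0)
  rw [integral_eq_zero_of_ae hae] at hE
  exact absurd hE.symm hε.ne'

lemma nonempty (hμ₁ : IsGoodMarginal μ₁ u₁ a₁ b₁ lam Lam) (hε : 0 < ε)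
    (hg : ContinuousOn g (Icc a₁ b₁))
    (hE : ∫ y in Icc a₁ b₁, max (x * y - f x - g y) 0 ∂μ₁ = ε) :
    (secX f g a₁ b₁ x).Nonempty := by
  rcases (secX f g a₁ b₁ x).eq_empty_or_nonempty with h | h
  · have := measure_pos (x := x) hμ₁ hε hg hE
    rw [h] at this; simp at this
  · exact h

section basic

variable (hμ₁ : IsGoodMarginal μ₁ u₁ a₁ b₁ lam Lam) (hε : 0 < ε)
  (hg : ContinuousOn g (Icc a₁ b₁)) {x : ℝ}
  (hE : ∫ y in Icc a₁ b₁, max (x * y - f x - g y) 0 ∂μ₁ = ε)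

include hμ₁ hε hg hE

lemma ym_mem : ymF f g a₁ b₁ x ∈ secX f g a₁ b₁ x :=
  (isCompact hg x).sInf_mem (nonempty hμ₁ hε hg hE)

lemma yM_mem : yMF f g a₁ b₁ x ∈ secX f g a₁ b₁ x :=
  (isCompact hg x).sSup_mem (nonempty hμ₁ hε hg hE)

lemma ym_le_yM : ymF f g a₁ b₁ x ≤ yMF f g a₁ b₁ x :=
  csInf_le_csSup (nonempty hμ₁ hε hg hE) (bddBelow_Icc.mono (subset x))
    (bddAbove_Icc.mono (subset x))

/-- some point of the section has strictly positive `ξ`. -/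
lemma exists_pos : ∃ y₀ ∈ secX f g a₁ b₁ x, 0 < x * y₀ - f x - g y₀ := by
  by_contra hc
  push_neg at hc
  have : ∀ y ∈ Icc a₁ b₁, max (x * y - f x - g y) 0 = 0 := by
    intro y hy
    rcases le_or_gt (x * y - f x - g y) 0 with h | h
    · exact max_eq_right h
    · exact absurd h (not_lt.2 (hc y ⟨hy, h.le⟩))
  rw [setIntegral_congr_fun measurableSet_Icc this] at hE
  simp at hE
  exact hε.ne' hE.symm

/-- `ξ(x, a₁) < 0 ↔ a₁ < y_m(x)`. -/
lemma lt_iff_lower (hab₁ : a₁ ≤ b₁) :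
    x * a₁ - f x - g a₁ < 0 ↔ a₁ < ymF f g a₁ b₁ x := by
  constructor
  · intro h
    rcases lt_or_eq_of_le ((ym_mem hμ₁ hε hg hE).1.1) with h' | h'
    · exact h'
    · exfalso
      have := (ym_mem hμ₁ hε hg hE).2
      rw [← h'] at this
      linarith
  · intro h
    by_contra hc
    push_neg at hc
    have : a₁ ∈ secX f g a₁ b₁ x := ⟨⟨le_refl _, hab₁⟩, hc⟩
    exact absurd (csInf_le (bddBelow_Icc.mono (subset x)) this) (not_le.2 h)

lemma lt_iff_upper (hab₁ : a₁ ≤ b₁) :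
    x * b₁ - f x - g b₁ < 0 ↔ yMF f g a₁ b₁ x < b₁ := by
  constructor
  · intro h
    rcases lt_or_eq_of_le ((yM_mem hμ₁ hε hg hE).1.2) with h' | h'
    · exact h'
    · exfalso
      have := (yM_mem hμ₁ hε hg hE).2
      rw [h'] at this
      linarith
  · intro h
    by_contra hc
    push_neg at hc
    have : b₁ ∈ secX f g a₁ b₁ x := ⟨⟨hab₁, le_refl _⟩, hc⟩
    exact absurd (le_csSup (bddAbove_Icc.mono (subset x)) this) (not_le.2 h)

/-- if `y_m(x) > a₁` then `ξ(x, y_m(x)) = 0`. -/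
lemma xi_ym_eq_zero (h : a₁ < ymF f g a₁ b₁ x) :
    x * ymF f g a₁ b₁ x - f x - g (ymF f g a₁ b₁ x) = 0 := by
  set Y := ymF f g a₁ b₁ x with hY
  have hmem := ym_mem hμ₁ hε hg hE
  rcases lt_or_eq_of_le hmem.2 with hpos | heq
  · exfalso
    have hcont : ContinuousWithinAt (fun y => x * y - f x - g y) (Icc a₁ b₁) Y :=
      ((Continuous.continuousOn (by continuity)).sub hg).continuousWithinAt hmem.1
    have hev : ∀ᶠ y in nhdsWithin Y (Icc a₁ b₁), 0 < x * y - f x - g y :=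
      hcont.eventually (eventually_gt_nhds hpos)
    have hsub : Ioo a₁ Y ⊆ Icc a₁ b₁ := fun y hy => ⟨hy.1.le, hy.2.le.trans hmem.1.2⟩
    have hnb : (nhdsWithin Y (Ioo a₁ Y)).NeBot := by
      rw [← mem_closure_iff_nhdsWithin_neBot, closure_Ioo h.ne]
      exact ⟨h.le, le_refl _⟩
    have hev' := hev.filter_mono (nhdsWithin_mono Y hsub)
    obtain ⟨y, hy1, hy2⟩ := (hev'.and self_mem_nhdsWithin).exists
    have : y ∈ secX f g a₁ b₁ x := ⟨hsub hy2, hy1.le⟩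
    exact absurd (csInf_le (bddBelow_Icc.mono (subset x)) this) (not_le.2 hy2.2)
  · exact heq.symm

/-- if `y_M(x) < b₁` then `ξ(x, y_M(x)) = 0`. -/
lemma xi_yM_eq_zero (h : yMF f g a₁ b₁ x < b₁) :
    x * yMF f g a₁ b₁ x - f x - g (yMF f g a₁ b₁ x) = 0 := by
  set Y := yMF f g a₁ b₁ x with hY
  have hmem := yM_mem hμ₁ hε hg hE
  rcases lt_or_eq_of_le hmem.2 with hpos | heq
  · exfalso
    have hcont : ContinuousWithinAt (fun y => x * y - f x - g y) (Icc a₁ b₁) Y :=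
      ((Continuous.continuousOn (by continuity)).sub hg).continuousWithinAt hmem.1
    have hev : ∀ᶠ y in nhdsWithin Y (Icc a₁ b₁), 0 < x * y - f x - g y :=
      hcont.eventually (eventually_gt_nhds hpos)
    have hsub : Ioo Y b₁ ⊆ Icc a₁ b₁ := fun y hy => ⟨hmem.1.1.trans hy.1.le, hy.2.le⟩
    have hnb : (nhdsWithin Y (Ioo Y b₁)).NeBot := by
      rw [← mem_closure_iff_nhdsWithin_neBot, closure_Ioo h.ne]
      exact ⟨le_refl _, h.le⟩
    have hev' := hev.filter_mono (nhdsWithin_mono Y hsub)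
    obtain ⟨y, hy1, hy2⟩ := (hev'.and self_mem_nhdsWithin).exists
    have : y ∈ secX f g a₁ b₁ x := ⟨hsub hy2, hy1.le⟩
    exact absurd (le_csSup (bddAbove_Icc.mono (subset x)) this) (not_le.2 hy2.1)
  · exact heq.symm

end basic

/-- subgradient inequality: `Tmap(x) (x' - x) ≤ f(x') - f(x)`. -/
lemma subgrad (hμ₁ : IsGoodMarginal μ₁ u₁ a₁ b₁ lam Lam) (hε : 0 < ε)
    (hg : ContinuousOn g (Icc a₁ b₁))
    (hE1 : ∀ x ∈ Icc a₀ b₀, ∫ y in Icc a₁ b₁, max (x * y - f x - g y) 0 ∂μ₁ = ε)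
    {x x' : ℝ} (hx : x ∈ Icc a₀ b₀) (hx' : x' ∈ Icc a₀ b₀) :
    Tmap μ₁ f g a₁ b₁ x * (x' - x) ≤ f x' - f x := by
  classical
  haveI := hμ₁.1
  set S := secX f g a₁ b₁ x with hS
  have hSm : MeasurableSet S := measurableSet hg x
  have hSsub : S ⊆ Icc a₁ b₁ := subset x
  have hμS : 0 < μ₁ S := measure_pos hμ₁ hε hg (hE1 x hx)
  have hm : 0 < (μ₁ S).toReal := ENNReal.toReal_pos hμS.ne' (GM.finite hμ₁ S)
  set δ := f x' - f x with hδ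
  set s : ℝ → ℝ := fun y => (x' - x) * y - δ with hsdef
  have hxicont : ∀ z : ℝ, ContinuousOn (fun y => max (z * y - f z - g y) 0) (Icc a₁ b₁) :=
    fun z => ((Continuous.continuousOn (by continuity)).sub hg).sup continuousOn_const
  have hint1 : IntegrableOn (fun y => max (x * y - f x - g y) 0) (Icc a₁ b₁) μ₁ :=
    GM.integrableOn hμ₁ (hxicont x) (le_refl _)
  have hint2 : IntegrableOn (fun y => max (x' * y - f x' - g y) 0) (Icc a₁ b₁) μ₁ :=
    GM.integrableOn hμ₁ (hxicont x') (le_refl _)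
  have hints : IntegrableOn s (Icc a₁ b₁) μ₁ :=
    GM.integrableOn hμ₁ (Continuous.continuousOn (by continuity)) (le_refl _)
  have hindint : Integrable (S.indicator s) (μ₁.restrict (Icc a₁ b₁)) :=
    hints.indicator hSm
  have hptwise : ∀ y ∈ Icc a₁ b₁,
      max (x * y - f x - g y) 0 + S.indicator s y ≤ max (x' * y - f x' - g y) 0 := by
    intro y hy
    have hxi' : x' * y - f x' - g y = (x * y - f x - g y) + s y := by
      simp only [hsdef, hδ]; ring
    by_cases hyS : y ∈ S
    · rw [indicator_of_mem hyS, max_eq_left hyS.2, hxi']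
      exact le_max_left _ _
    · rw [indicator_of_notMem hyS, add_zero]
      have : ¬ (0 ≤ x * y - f x - g y) := fun h => hyS ⟨hy, h⟩
      rw [max_eq_right (le_of_not_ge this)]
      exact le_max_right _ _
  have key : ∫ y in Icc a₁ b₁, (max (x * y - f x - g y) 0 + S.indicator s y) ∂μ₁
      ≤ ∫ y in Icc a₁ b₁, max (x' * y - f x' - g y) 0 ∂μ₁ :=
    setIntegral_mono_on (hint1.add hindint) hint2 measurableSet_Icc hptwise
  rw [integral_add hint1 hindint, hE1 x hx, hE1 x' hx',
    setIntegral_indicator hSm, inter_eq_self_of_subset_right hSsub] at key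
  have hsint : ∫ y in S, s y ∂μ₁ ≤ 0 := by linarith
  have hidint : IntegrableOn (fun y : ℝ => y) S μ₁ :=
    GM.integrableOn hμ₁ continuous_id.continuousOn hSsub
  have hexp : ∫ y in S, s y ∂μ₁
      = (x' - x) * (∫ y in S, y ∂μ₁) - (μ₁ S).toReal * δ := by
    rw [hsdef]
    rw [integral_sub (hidint.const_mul _) (integrableOn_const (measure_ne_top μ₁ S))]
    rw [integral_const_mul, setIntegral_const]
    simp [smul_eq_mul, mul_comm, measureReal_def]
  rw [hexp] at hsint
  rw [Tmap, ← hS, div_mul_eq_mul_div, div_le_iff₀ hm]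
  nlinarith [hsint]

section structure_lemmas

variable {G : ℝ → ℝ}
  (hgsub : ∀ y ∈ Icc a₁ b₁, ∀ y' ∈ Icc a₁ b₁, G y * (y' - y) ≤ g y' - g y)

include hgsub

/-- concavity-type combination bound for `ξ(x, ·)`. -/
lemma combo {x p q y : ℝ} (hp : p ∈ Icc a₁ b₁) (hq : q ∈ Icc a₁ b₁)
    (hpy : p ≤ y) (hyq : y ≤ q) :
    (q - y) * (x * p - f x - g p) + (y - p) * (x * q - f x - g q)
      ≤ (q - p) * (x * y - f x - g y) := by
  have hy : y ∈ Icc a₁ b₁ := ⟨hp.1.trans hpy, hyq.trans hq.2⟩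
  have h1 := hgsub y hy p hp
  have h2 := hgsub y hy q hq
  nlinarith [mul_nonneg (sub_nonneg.2 hyq) (sub_nonneg.2 h1),
    mul_nonneg (sub_nonneg.2 hpy) (sub_nonneg.2 h2)]

variable (hμ₁ : IsGoodMarginal μ₁ u₁ a₁ b₁ lam Lam) (hε : 0 < ε)
  (hg : ContinuousOn g (Icc a₁ b₁)) {x : ℝ}
  (hE : ∫ y in Icc a₁ b₁, max (x * y - f x - g y) 0 ∂μ₁ = ε)

include hμ₁ hε hg hE

lemma secX_eq_Icc : secX f g a₁ b₁ x = Icc (ymF f g a₁ b₁ x) (yMF f g a₁ b₁ x) := by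
  have hym := ym_mem hμ₁ hε hg hE
  have hyM := yM_mem hμ₁ hε hg hE
  apply Subset.antisymm
  · intro y hy
    exact ⟨csInf_le (bddBelow_Icc.mono (subset x)) hy,
      le_csSup (bddAbove_Icc.mono (subset x)) hy⟩
  · intro y hy
    rcases eq_or_lt_of_le (ym_le_yM hμ₁ hε hg hE) with heq | hlt
    · have : y = ymF f g a₁ b₁ x := le_antisymm (heq ▸ hy.2) hy.1
      exact this ▸ hym
    · have hc := combo (f := f) hgsub (x := x) hym.1 hyM.1 hy.1 hy.2
      have h1 : 0 ≤ (yMF f g a₁ b₁ x - y) * (x * ymF f g a₁ b₁ x - f x - g (ymF f g a₁ b₁ x)) :=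
        mul_nonneg (by linarith [hy.2]) hym.2
      have h2 : 0 ≤ (y - ymF f g a₁ b₁ x) * (x * yMF f g a₁ b₁ x - f x - g (yMF f g a₁ b₁ x)) :=
        mul_nonneg (by linarith [hy.1]) hyM.2
      refine ⟨⟨hym.1.1.trans hy.1, hy.2.trans hyM.1.2⟩, ?_⟩
      nlinarith
lemma xi_pos_Ioo {y : ℝ} (hy : y ∈ Ioo (ymF f g a₁ b₁ x) (yMF f g a₁ b₁ x)) :
    0 < x * y - f x - g y := by
  obtain ⟨y₀, hy₀S, hy₀pos⟩ := exists_pos hμ₁ hε hg hE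
  have hym := ym_mem hμ₁ hε hg hE
  have hyM := yM_mem hμ₁ hε hg hE
  have hy₀m : ymF f g a₁ b₁ x ≤ y₀ := csInf_le (bddBelow_Icc.mono (subset x)) hy₀S
  have hy₀M : y₀ ≤ yMF f g a₁ b₁ x := le_csSup (bddAbove_Icc.mono (subset x)) hy₀S
  rcases le_or_gt y y₀ with hc | hc
  · rcases eq_or_lt_of_le hc with heq | hlt
    · exact heq ▸ hy₀pos
    · have := combo (f := f) hgsub (x := x) hym.1 hy₀S.1 hy.1.le hlt.le
      nlinarith [hym.2, hy.1, hy.2]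
  · have := combo (f := f) hgsub (x := x) hy₀S.1 hyM.1 hc.le hy.2.le
    nlinarith [hyM.2, hy.1, hy.2]

lemma ym_lt_yM (hlam : 0 < lam) : ymF f g a₁ b₁ x < yMF f g a₁ b₁ x := by
  rcases eq_or_lt_of_le (ym_le_yM hμ₁ hε hg hE) with heq | hlt
  · exfalso
    have hsub' : secX f g a₁ b₁ x ⊆ {ymF f g a₁ b₁ x} := by
      rw [secX_eq_Icc hgsub hμ₁ hε hg hE, ← heq, Icc_self]
    exact absurd (measure_mono_null hsub' (GM.singleton hμ₁ _))
      (measure_pos hμ₁ hε hg hE).ne'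
  · exact hlt

lemma Tmap_mem_Ioo (hlam : 0 < lam) :
    Tmap μ₁ f g a₁ b₁ x ∈ Ioo (ymF f g a₁ b₁ x) (yMF f g a₁ b₁ x) := by
  haveI := hμ₁.1
  set Ym := ymF f g a₁ b₁ x
  set YM := yMF f g a₁ b₁ x
  have hYmM : Ym < YM := ym_lt_yM hgsub hμ₁ hε hg hE hlam
  set S := secX f g a₁ b₁ x with hSdef
  have hSm : MeasurableSet S := measurableSet hg x
  have hSsub : S ⊆ Icc a₁ b₁ := subset x
  have hμS : 0 < μ₁ S := measure_pos hμ₁ hε hg hE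
  have hm : 0 < (μ₁ S).toReal := ENNReal.toReal_pos hμS.ne' (GM.finite hμ₁ S)
  have hSI : S = Icc Ym YM := secX_eq_Icc hgsub hμ₁ hε hg hE
  have hIoo : Ioo Ym YM ⊆ Icc a₁ b₁ := fun y hy =>
    ⟨((ym_mem hμ₁ hε hg hE).1.1).trans hy.1.le, hy.2.le.trans ((yM_mem hμ₁ hε hg hE).1.2)⟩
  have hμIoo : 0 < μ₁ (Ioo Ym YM) := GM.pos_Ioo hμ₁ hlam hYmM hIoo
  have hidint : IntegrableOn (fun y : ℝ => y) S μ₁ :=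
    GM.integrableOn hμ₁ continuous_id.continuousOn hSsub
  have key : ∀ c : ℝ, (∀ y ∈ S, c ≤ y) → (Ioo Ym YM ⊆ {y | y ≠ c}) →
      c * (μ₁ S).toReal < ∫ y in S, y ∂μ₁ := by
    intro c hc hne
    have h0 : 0 ≤ᵐ[μ₁.restrict S] fun y => y - c :=
      ae_restrict_of_forall_mem hSm fun y hy => sub_nonneg.2 (hc y hy)
    have hint : IntegrableOn (fun y : ℝ => y - c) S μ₁ :=
      hidint.sub (integrableOn_const (measure_ne_top μ₁ S))
    have hpos : 0 < ∫ y in S, (y - c) ∂μ₁ := by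
      rcases eq_or_lt_of_le (integral_nonneg_of_ae h0) with heq | h
      · exfalso
        have := (setIntegral_eq_zero_iff_of_nonneg_ae h0 hint).1 heq.symm
        have hnull : (μ₁.restrict S) {y | y - c ≠ 0} = 0 := by
          have := this
          rw [Filter.eventuallyEq_iff_exists_mem] at this
          obtain ⟨s, hs, hs'⟩ := this
          rw [mem_ae_iff] at hs
          refine measure_mono_null ?_ hs
          intro y hy hys
          exact hy (hs' hys)
        have hN : MeasurableSet {y : ℝ | y - c ≠ 0} := by
          have : {y : ℝ | y - c ≠ 0} = {c}ᶜ := by ext y; simp [sub_eq_zero]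
          rw [this]; exact (measurableSet_singleton c).compl
        rw [Measure.restrict_apply hN] at hnull
        refine absurd hnull (ne_of_gt (lt_of_lt_of_le hμIoo (measure_mono ?_)))
        intro y hy
        refine ⟨?_, hSI ▸ Ioo_subset_Icc_self hy⟩
        simp only [mem_setOf_eq, sub_ne_zero]
        exact hne hy
      · exact h
    rw [integral_sub hidint (integrableOn_const (measure_ne_top μ₁ S)),
      setIntegral_const, smul_eq_mul, measureReal_def] at hpos
    linarith
  constructor
  · rw [Tmap, ← hSdef, lt_div_iff₀ hm]
    refine key Ym (fun y hy => ?_) (fun y hy => hy.1.ne') 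
    rw [hSI] at hy; exact hy.1
  · rw [Tmap, ← hSdef, div_lt_iff₀ hm]
    have key2 : ∀ c : ℝ, (∀ y ∈ S, y ≤ c) → (Ioo Ym YM ⊆ {y | y ≠ c}) →
        (∫ y in S, y ∂μ₁) < c * (μ₁ S).toReal := by
      intro c hc hne
      have h0 : 0 ≤ᵐ[μ₁.restrict S] fun y => c - y :=
        ae_restrict_of_forall_mem hSm fun y hy => sub_nonneg.2 (hc y hy)
      have hint : IntegrableOn (fun y : ℝ => c - y) S μ₁ :=
        (integrableOn_const (measure_ne_top μ₁ S)).sub hidint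
      have hpos : 0 < ∫ y in S, (c - y) ∂μ₁ := by
        rcases eq_or_lt_of_le (integral_nonneg_of_ae h0) with heq | h
        · exfalso
          have := (setIntegral_eq_zero_iff_of_nonneg_ae h0 hint).1 heq.symm
          have hnull : (μ₁.restrict S) {y | c - y ≠ 0} = 0 := by
            rw [Filter.eventuallyEq_iff_exists_mem] at this
            obtain ⟨s, hs, hs'⟩ := this
            rw [mem_ae_iff] at hs
            refine measure_mono_null ?_ hs
            intro y hy hys
            exact hy (hs' hys)
          have hN : MeasurableSet {y : ℝ | c - y ≠ 0} := by
            have : {y : ℝ | c - y ≠ 0} = {c}ᶜ := by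
              ext y; simp [sub_eq_zero, eq_comm]
            rw [this]; exact (measurableSet_singleton c).compl
          rw [Measure.restrict_apply hN] at hnull
          refine absurd hnull (ne_of_gt (lt_of_lt_of_le hμIoo (measure_mono ?_)))
          intro y hy
          refine ⟨?_, hSI ▸ Ioo_subset_Icc_self hy⟩
          simp only [mem_setOf_eq, sub_ne_zero]
          exact fun hcy => (hne hy) hcy.symm
        · exact h
      rw [integral_sub (integrableOn_const (measure_ne_top μ₁ S) : IntegrableOn (fun _ => c) S μ₁) hidint,
        setIntegral_const, smul_eq_mul, measureReal_def] at hpos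
      linarith
    refine key2 YM (fun y hy => ?_) (fun y hy => hy.2.ne)
    rw [hSI] at hy; exact hy.2

end structure_lemmas
section evneg

/-- negativity of `ξ` on a compact subset persists for nearby `x`. -/
lemma ev_neg {x₀ : ℝ} (hg : ContinuousOn g (Icc a₁ b₁)) (hf : ContinuousOn f (Icc a₀ b₀))
    (hx₀ : x₀ ∈ Icc a₀ b₀) {K : Set ℝ}
    (hK : K ⊆ Icc a₁ b₁) (hKc : IsCompact K)
    (hneg : ∀ y ∈ K, x₀ * y - f x₀ - g y < 0) :
    ∀ᶠ x in nhdsWithin x₀ (Icc a₀ b₀), ∀ y ∈ K, x * y - f x - g y < 0 := by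
  rcases K.eq_empty_or_nonempty with rfl | hne
  · filter_upwards [] with x y hy; exact absurd hy (notMem_empty y)
  set C : ℝ := max |a₁| |b₁| with hC
  have hC0 : 0 ≤ C := le_trans (abs_nonneg a₁) (le_max_left _ _)
  have hyC : ∀ y ∈ K, |y| ≤ C := by
    intro y hy
    rcases hK hy with ⟨h1, h2⟩
    rw [abs_le]
    constructor
    · calc -C ≤ -|a₁| := by simp [hC]
        _ ≤ a₁ := neg_abs_le a₁
        _ ≤ y := h1
    · exact h2.trans ((le_abs_self b₁).trans (le_max_right _ _))
  have hgc : ContinuousOn (fun y => x₀ * y - f x₀ - g y) K :=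
    ((Continuous.continuousOn (by continuity)).sub (hg.mono hK))
  obtain ⟨ys, hysK, hmax⟩ := hKc.exists_isMaxOn hne hgc
  set m : ℝ := -(x₀ * ys - f x₀ - g ys) with hm
  have hm0 : 0 < m := by simp only [hm, neg_pos]; exact hneg ys hysK
  have hev1 : ∀ᶠ x in nhdsWithin x₀ (Icc a₀ b₀), |x - x₀| < m / (2 * (C + 1)) := by
    have : ContinuousWithinAt (fun x => x - x₀) (Icc a₀ b₀) x₀ :=
      (continuous_id.sub continuous_const).continuousWithinAt
    have h2 : ∀ᶠ z in nhds (x₀ - x₀ : ℝ), |z| < m / (2 * (C + 1)) := by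
      have : (0:ℝ) < m / (2 * (C + 1)) := by positivity
      simpa using eventually_abs_sub_lt 0 this
    simpa using this.eventually h2
  have hev2 : ∀ᶠ x in nhdsWithin x₀ (Icc a₀ b₀), |f x - f x₀| < m / 2 := by
    have hcf : ContinuousWithinAt f (Icc a₀ b₀) x₀ := hf.continuousWithinAt hx₀
    have h2 : ∀ᶠ z in nhds (f x₀), |z - f x₀| < m / 2 :=
      eventually_abs_sub_lt _ (by positivity)
    exact hcf.eventually h2
  filter_upwards [hev1, hev2] with x h1 h2 y hy
  have hb : x₀ * y - f x₀ - g y ≤ -m := by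
    have hmax' : x₀ * y - f x₀ - g y ≤ x₀ * ys - f x₀ - g ys := hmax hy
    simp only [hm]
    linarith
  have hxy : |(x - x₀) * y| < m / 2 := by
    rcases eq_or_lt_of_le (abs_nonneg (x - x₀)) with h0 | h0
    · rw [abs_mul, ← h0, zero_mul]; positivity
    · calc |(x - x₀) * y| = |x - x₀| * |y| := abs_mul _ _
        _ ≤ |x - x₀| * C := by
            exact mul_le_mul_of_nonneg_left (hyC y hy) (abs_nonneg _)
        _ < (m / (2 * (C + 1))) * (C + 1) := by
            apply mul_lt_mul' h1.le (by linarith) hC0 (by positivity)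
        _ = m / 2 := by field_simp
  have : x * y - f x - g y = (x₀ * y - f x₀ - g y) + (x - x₀) * y - (f x - f x₀) := by ring
  rw [this]
  have := abs_lt.1 hxy
  have := abs_lt.1 h2
  linarith

end evneg

section continuity

variable {G : ℝ → ℝ}
  (hgsub : ∀ y ∈ Icc a₁ b₁, ∀ y' ∈ Icc a₁ b₁, G y * (y' - y) ≤ g y' - g y)
  (hμ₁ : IsGoodMarginal μ₁ u₁ a₁ b₁ lam Lam) (hε : 0 < ε) (hlam : 0 < lam)
  (hg : ContinuousOn g (Icc a₁ b₁)) (hf : ContinuousOn f (Icc a₀ b₀))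
  (hE1 : ∀ x ∈ Icc a₀ b₀, ∫ y in Icc a₁ b₁, max (x * y - f x - g y) 0 ∂μ₁ = ε)
  {x₀ : ℝ} (hx₀ : x₀ ∈ Icc a₀ b₀)

include hgsub hμ₁ hε hlam hg hf hE1 hx₀

/-- continuity of `y_m` within `Icc a₀ b₀`. -/
lemma ym_tendsto :
    Filter.Tendsto (ymF f g a₁ b₁) (nhdsWithin x₀ (Icc a₀ b₀)) (nhds (ymF f g a₁ b₁ x₀)) := by
  rw [Metric.tendsto_nhds]
  intro η hη
  set Ym := ymF f g a₁ b₁ x₀ with hYm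
  have hym₀ := ym_mem hμ₁ hε hg (hE1 x₀ hx₀)
  -- upper bound: find a witness with positive ξ just above Ym
  have hupper : ∀ᶠ x in nhdsWithin x₀ (Icc a₀ b₀), ymF f g a₁ b₁ x < Ym + η / 2 := by
    have hYmM := ym_lt_yM hgsub hμ₁ hε hg (hE1 x₀ hx₀) hlam
    obtain ⟨ys, hys⟩ : (Ioo Ym (min (yMF f g a₁ b₁ x₀) (Ym + η / 2))).Nonempty := by
      rw [nonempty_Ioo, lt_min_iff]
      exact ⟨hYmM, by linarith⟩
    have hysIoo : ys ∈ Ioo Ym (yMF f g a₁ b₁ x₀) :=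
      ⟨hys.1, hys.2.trans_le (min_le_left _ _)⟩
    have hyspos := xi_pos_Ioo (f := f) hgsub hμ₁ hε hg (hE1 x₀ hx₀) hysIoo
    have hysIcc : ys ∈ Icc a₁ b₁ :=
      ⟨hym₀.1.1.trans hys.1.le, hysIoo.2.le.trans (yM_mem hμ₁ hε hg (hE1 x₀ hx₀)).1.2⟩
    have hcx : ContinuousWithinAt (fun x => x * ys - f x - g ys) (Icc a₀ b₀) x₀ :=
      ((continuous_mul_right ys).continuousWithinAt.sub (hf.continuousWithinAt hx₀)).sub
        continuousWithinAt_const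
    have hev : ∀ᶠ x in nhdsWithin x₀ (Icc a₀ b₀), 0 < x * ys - f x - g ys :=
      hcx.eventually (eventually_gt_nhds hyspos)
    filter_upwards [hev] with x hx
    have : ys ∈ secX f g a₁ b₁ x := ⟨hysIcc, hx.le⟩
    calc ymF f g a₁ b₁ x ≤ ys := csInf_le (bddBelow_Icc.mono (subset x)) this
      _ < Ym + η / 2 := hys.2.trans_le (min_le_right _ _)
  -- lower bound
  have hlower : ∀ᶠ x in nhdsWithin x₀ (Icc a₀ b₀), Ym - η / 2 ≤ ymF f g a₁ b₁ x := by
    set K := Icc a₁ (Ym - η / 2) with hK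
    have hKsub : K ⊆ Icc a₁ b₁ := by
      intro y hy
      exact ⟨hy.1, hy.2.trans (by linarith [hym₀.1.2])⟩
    have hKneg : ∀ y ∈ K, x₀ * y - f x₀ - g y < 0 := by
      intro y hy
      by_contra hc
      push_neg at hc
      have : y ∈ secX f g a₁ b₁ x₀ := ⟨hKsub hy, hc⟩
      have h3 : Ym ≤ y := csInf_le (bddBelow_Icc.mono (subset x₀)) this
      linarith [hy.2]
    have hev := ev_neg hg hf hx₀ hKsub isCompact_Icc hKneg
    filter_upwards [hev, self_mem_nhdsWithin] with x hx hxI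
    refine le_csInf (nonempty hμ₁ hε hg (hE1 x hxI)) fun y hy => ?_
    by_contra hc
    push_neg at hc
    have hyK : y ∈ K := ⟨hy.1.1, hc.le⟩
    exact absurd hy.2 (not_le.2 (by linarith [hx y hyK]))
  filter_upwards [hupper, hlower] with x h1 h2
  rw [Real.dist_eq, abs_lt]
  constructor <;> [linarith; linarith]

/-- continuity of `y_M` within `Icc a₀ b₀`. -/
lemma yM_tendsto :
    Filter.Tendsto (yMF f g a₁ b₁) (nhdsWithin x₀ (Icc a₀ b₀)) (nhds (yMF f g a₁ b₁ x₀)) := by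
  rw [Metric.tendsto_nhds]
  intro η hη
  set YM := yMF f g a₁ b₁ x₀ with hYM
  have hyM₀ := yM_mem hμ₁ hε hg (hE1 x₀ hx₀)
  have hlower : ∀ᶠ x in nhdsWithin x₀ (Icc a₀ b₀), YM - η / 2 < yMF f g a₁ b₁ x := by
    have hYmM := ym_lt_yM hgsub hμ₁ hε hg (hE1 x₀ hx₀) hlam
    obtain ⟨ys, hys⟩ : (Ioo (max (ymF f g a₁ b₁ x₀) (YM - η / 2)) YM).Nonempty := by
      rw [nonempty_Ioo, max_lt_iff]
      exact ⟨hYmM, by linarith⟩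
    have hysIoo : ys ∈ Ioo (ymF f g a₁ b₁ x₀) YM :=
      ⟨(le_max_left _ _).trans_lt hys.1, hys.2⟩
    have hyspos := xi_pos_Ioo (f := f) hgsub hμ₁ hε hg (hE1 x₀ hx₀) hysIoo
    have hysIcc : ys ∈ Icc a₁ b₁ :=
      ⟨(ym_mem hμ₁ hε hg (hE1 x₀ hx₀)).1.1.trans hysIoo.1.le, hys.2.le.trans hyM₀.1.2⟩
    have hcx : ContinuousWithinAt (fun x => x * ys - f x - g ys) (Icc a₀ b₀) x₀ :=
      ((continuous_mul_right ys).continuousWithinAt.sub (hf.continuousWithinAt hx₀)).sub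
        continuousWithinAt_const
    have hev : ∀ᶠ x in nhdsWithin x₀ (Icc a₀ b₀), 0 < x * ys - f x - g ys :=
      hcx.eventually (eventually_gt_nhds hyspos)
    filter_upwards [hev] with x hx
    have hmem : ys ∈ secX f g a₁ b₁ x := ⟨hysIcc, hx.le⟩
    calc YM - η / 2 < ys := (le_max_right _ _).trans_lt hys.1
      _ ≤ yMF f g a₁ b₁ x := le_csSup (bddAbove_Icc.mono (subset x)) hmem
  have hupper : ∀ᶠ x in nhdsWithin x₀ (Icc a₀ b₀), yMF f g a₁ b₁ x ≤ YM + η / 2 := by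
    set K := Icc (YM + η / 2) b₁ with hK
    have hKsub : K ⊆ Icc a₁ b₁ := by
      intro y hy
      exact ⟨(by linarith [hyM₀.1.1] : a₁ ≤ YM + η / 2).trans hy.1, hy.2⟩
    have hKneg : ∀ y ∈ K, x₀ * y - f x₀ - g y < 0 := by
      intro y hy
      by_contra hc
      push_neg at hc
      have : y ∈ secX f g a₁ b₁ x₀ := ⟨hKsub hy, hc⟩
      have h3 : y ≤ YM := le_csSup (bddAbove_Icc.mono (subset x₀)) this
      linarith [hy.1]
    have hev := ev_neg hg hf hx₀ hKsub isCompact_Icc hKneg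
    filter_upwards [hev, self_mem_nhdsWithin] with x hx hxI
    refine csSup_le (nonempty hμ₁ hε hg (hE1 x hxI)) fun y hy => ?_
    by_contra hc
    push_neg at hc
    have hyK : y ∈ K := ⟨hc.le, hy.1.2⟩
    exact absurd hy.2 (not_le.2 (by linarith [hx y hyK]))
  filter_upwards [hupper, hlower] with x h1 h2
  rw [Real.dist_eq, abs_lt]
  constructor <;> [linarith; linarith]

omit hgsub hμ₁ hε hlam hg hf hE1 hx₀ in
/-- splitting a set integral over `Icc c d` via primitives based at `a₁`. -/
lemma integral_split {v : ℝ → ℝ} (hv : IntegrableOn v (Icc a₁ b₁) volume) {c d : ℝ}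
    (hc : c ∈ Icc a₁ b₁) (hd : d ∈ Icc a₁ b₁) (hcd : c ≤ d) :
    ∫ y in Icc c d, v y = (∫ y in Ioc a₁ d, v y) - ∫ y in Ioc a₁ c, v y := by
  have h1 : IntegrableOn v (Ioc a₁ c) volume :=
    hv.mono_set fun y hy => ⟨hy.1.le, hy.2.trans hc.2⟩
  have h2 : IntegrableOn v (Ioc c d) volume :=
    hv.mono_set fun y hy => ⟨hc.1.trans hy.1.le, hy.2.trans hd.2⟩
  have hu : Ioc a₁ c ∪ Ioc c d = Ioc a₁ d := Ioc_union_Ioc_eq_Ioc hc.1 hcd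
  have hdisj : Disjoint (Ioc a₁ c) (Ioc c d) := by
    rw [Set.disjoint_iff]
    rintro y ⟨h1', h2'⟩
    exact absurd h1'.2 (not_le.2 h2'.1)
  rw [integral_Icc_eq_integral_Ioc, ← hu,
    setIntegral_union hdisj measurableSet_Ioc h1 h2]
  ring

lemma mu_toReal_eq :
    (μ₁ (secX f g a₁ b₁ x₀)).toReal
      = (∫ y in Ioc a₁ (yMF f g a₁ b₁ x₀), u₁ y) - ∫ y in Ioc a₁ (ymF f g a₁ b₁ x₀), u₁ y := by
  rw [GM.toReal_apply hμ₁ hlam (measurableSet hg x₀),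
    inter_eq_self_of_subset_left (subset x₀),
    secX_eq_Icc hgsub hμ₁ hε hg (hE1 x₀ hx₀)]
  exact integral_split (hμ₁.2.2.1.integrableOn_compact isCompact_Icc)
    (ym_mem hμ₁ hε hg (hE1 x₀ hx₀)).1 (yM_mem hμ₁ hε hg (hE1 x₀ hx₀)).1
    (ym_le_yM hμ₁ hε hg (hE1 x₀ hx₀))

lemma int_y_eq :
    (∫ y in secX f g a₁ b₁ x₀, y ∂μ₁)
      = (∫ y in Ioc a₁ (yMF f g a₁ b₁ x₀), u₁ y * y)
        - ∫ y in Ioc a₁ (ymF f g a₁ b₁ x₀), u₁ y * y := by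
  rw [GM.setIntegral hμ₁ hlam (measurableSet hg x₀) (subset x₀) (fun y => y),
    secX_eq_Icc hgsub hμ₁ hε hg (hE1 x₀ hx₀)]
  exact integral_split ((hμ₁.2.2.1.mul continuous_id.continuousOn).integrableOn_compact
      isCompact_Icc)
    (ym_mem hμ₁ hε hg (hE1 x₀ hx₀)).1 (yM_mem hμ₁ hε hg (hE1 x₀ hx₀)).1
    (ym_le_yM hμ₁ hε hg (hE1 x₀ hx₀))

lemma Tmap_tendsto :
    Filter.Tendsto (Tmap μ₁ f g a₁ b₁) (nhdsWithin x₀ (Icc a₀ b₀))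
      (nhds (Tmap μ₁ f g a₁ b₁ x₀)) := by
  set P₁ : ℝ → ℝ := fun t => ∫ y in Ioc a₁ t, u₁ y with hP₁def
  set P₂ : ℝ → ℝ := fun t => ∫ y in Ioc a₁ t, u₁ y * y with hP₂def
  have hP₁ : ContinuousOn P₁ (Icc a₁ b₁) :=
    intervalIntegral.continuousOn_primitive (hμ₁.2.2.1.integrableOn_compact isCompact_Icc)
  have hP₂ : ContinuousOn P₂ (Icc a₁ b₁) :=
    intervalIntegral.continuousOn_primitive
      ((hμ₁.2.2.1.mul continuous_id.continuousOn).integrableOn_compact isCompact_Icc)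
  have hymt : Filter.Tendsto (ymF f g a₁ b₁) (nhdsWithin x₀ (Icc a₀ b₀))
      (nhdsWithin (ymF f g a₁ b₁ x₀) (Icc a₁ b₁)) := by
    rw [tendsto_nhdsWithin_iff]
    refine ⟨ym_tendsto hgsub hμ₁ hε hlam hg hf hE1 hx₀, ?_⟩
    filter_upwards [self_mem_nhdsWithin] with x hx
    exact (ym_mem hμ₁ hε hg (hE1 x hx)).1
  have hyMt : Filter.Tendsto (yMF f g a₁ b₁) (nhdsWithin x₀ (Icc a₀ b₀))
      (nhdsWithin (yMF f g a₁ b₁ x₀) (Icc a₁ b₁)) := by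
    rw [tendsto_nhdsWithin_iff]
    refine ⟨yM_tendsto hgsub hμ₁ hε hlam hg hf hE1 hx₀, ?_⟩
    filter_upwards [self_mem_nhdsWithin] with x hx
    exact (yM_mem hμ₁ hε hg (hE1 x hx)).1
  have hnum : Filter.Tendsto (fun x => P₂ (yMF f g a₁ b₁ x) - P₂ (ymF f g a₁ b₁ x))
      (nhdsWithin x₀ (Icc a₀ b₀))
      (nhds (P₂ (yMF f g a₁ b₁ x₀) - P₂ (ymF f g a₁ b₁ x₀))) :=
    (((hP₂.continuousWithinAt (yM_mem hμ₁ hε hg (hE1 x₀ hx₀)).1).tendsto.comp hyMt).sub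
      ((hP₂.continuousWithinAt (ym_mem hμ₁ hε hg (hE1 x₀ hx₀)).1).tendsto.comp hymt))
  have hden : Filter.Tendsto (fun x => P₁ (yMF f g a₁ b₁ x) - P₁ (ymF f g a₁ b₁ x))
      (nhdsWithin x₀ (Icc a₀ b₀))
      (nhds (P₁ (yMF f g a₁ b₁ x₀) - P₁ (ymF f g a₁ b₁ x₀))) :=
    (((hP₁.continuousWithinAt (yM_mem hμ₁ hε hg (hE1 x₀ hx₀)).1).tendsto.comp hyMt).sub
      ((hP₁.continuousWithinAt (ym_mem hμ₁ hε hg (hE1 x₀ hx₀)).1).tendsto.comp hymt))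
  have hm₀ : 0 < (μ₁ (secX f g a₁ b₁ x₀)).toReal :=
    ENNReal.toReal_pos (measure_pos hμ₁ hε hg (hE1 x₀ hx₀)).ne' (GM.finite hμ₁ _)
  have hdenne : P₁ (yMF f g a₁ b₁ x₀) - P₁ (ymF f g a₁ b₁ x₀) ≠ 0 := by
    rw [← mu_toReal_eq hgsub hμ₁ hε hlam hg hf hE1 hx₀]
    exact hm₀.ne'
  have hdiv := hnum.div hden hdenne
  have hEq : ∀ᶠ x in nhdsWithin x₀ (Icc a₀ b₀),
      (P₂ (yMF f g a₁ b₁ x) - P₂ (ymF f g a₁ b₁ x))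
        / (P₁ (yMF f g a₁ b₁ x) - P₁ (ymF f g a₁ b₁ x)) = Tmap μ₁ f g a₁ b₁ x := by
    filter_upwards [self_mem_nhdsWithin] with x hx
    simp only [Tmap, hP₁def, hP₂def]
    rw [int_y_eq hgsub hμ₁ hε hlam hg hf hE1 hx,
      mu_toReal_eq hgsub hμ₁ hε hlam hg hf hE1 hx]
  have hval : Tmap μ₁ f g a₁ b₁ x₀
      = (P₂ (yMF f g a₁ b₁ x₀) - P₂ (ymF f g a₁ b₁ x₀))
        / (P₁ (yMF f g a₁ b₁ x₀) - P₁ (ymF f g a₁ b₁ x₀)) := by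
    simp only [Tmap, hP₁def, hP₂def]
    rw [int_y_eq hgsub hμ₁ hε hlam hg hf hE1 hx₀,
      mu_toReal_eq hgsub hμ₁ hε hlam hg hf hE1 hx₀]
  rw [hval]
  exact hdiv.congr' hEq

lemma f_hasDeriv : HasDerivWithinAt f (Tmap μ₁ f g a₁ b₁ x₀) (Icc a₀ b₀) x₀ := by
  rw [hasDerivWithinAt_iff_isLittleO, Asymptotics.isLittleO_iff]
  intro c hc
  have hTt := Tmap_tendsto hgsub hμ₁ hε hlam hg hf hE1 hx₀
  have hev : ∀ᶠ x in nhdsWithin x₀ (Icc a₀ b₀),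
      |Tmap μ₁ f g a₁ b₁ x - Tmap μ₁ f g a₁ b₁ x₀| < c :=
    hTt.eventually (eventually_abs_sub_lt _ hc)
  filter_upwards [hev, self_mem_nhdsWithin] with x hT hxI
  have h1 := subgrad hμ₁ hε hg hE1 hx₀ hxI
  have h2 := subgrad hμ₁ hε hg hE1 hxI hx₀
  have hD0 : 0 ≤ f x - f x₀ - (x - x₀) * Tmap μ₁ f g a₁ b₁ x₀ := by linarith
  have hD1 : f x - f x₀ - (x - x₀) * Tmap μ₁ f g a₁ b₁ x₀
      ≤ (Tmap μ₁ f g a₁ b₁ x - Tmap μ₁ f g a₁ b₁ x₀) * (x - x₀) := by linarith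
  rw [Real.norm_eq_abs, Real.norm_eq_abs, smul_eq_mul, abs_of_nonneg hD0]
  calc f x - f x₀ - (x - x₀) * Tmap μ₁ f g a₁ b₁ x₀
      ≤ (Tmap μ₁ f g a₁ b₁ x - Tmap μ₁ f g a₁ b₁ x₀) * (x - x₀) := hD1
    _ ≤ |(Tmap μ₁ f g a₁ b₁ x - Tmap μ₁ f g a₁ b₁ x₀) * (x - x₀)| := le_abs_self _
    _ = |Tmap μ₁ f g a₁ b₁ x - Tmap μ₁ f g a₁ b₁ x₀| * |x - x₀| := abs_mul _ _
    _ ≤ c * |x - x₀| := mul_le_mul_of_nonneg_right hT.le (abs_nonneg _)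

end continuity

section avg

variable (hμ₀ : IsGoodMarginal μ₀ u₀ a₀ b₀ lam Lam)

include hμ₀

lemma avg_lt {S : Set ℝ} (hSm : MeasurableSet S) (hSsub : S ⊆ Icc a₀ b₀)
    (hμS : 0 < μ₀ S) {c : ℝ} (hub : ∀ x ∈ S, x ≤ c) :
    (∫ x in S, x ∂μ₀) / (μ₀ S).toReal < c := by
  haveI := hμ₀.1
  have hm : 0 < (μ₀ S).toReal := ENNReal.toReal_pos hμS.ne' (GM.finite hμ₀ S)
  have hidint : IntegrableOn (fun x : ℝ => x) S μ₀ :=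
    GM.integrableOn hμ₀ continuous_id.continuousOn hSsub
  have hcint : IntegrableOn (fun _ : ℝ => c) S μ₀ :=
    integrableOn_const (measure_ne_top μ₀ S)
  have h0 : 0 ≤ᵐ[μ₀.restrict S] fun x => c - x :=
    ae_restrict_of_forall_mem hSm fun x hx => sub_nonneg.2 (hub x hx)
  have hpos : 0 < ∫ x in S, (c - x) ∂μ₀ := by
    rcases eq_or_lt_of_le (integral_nonneg_of_ae h0) with heq | h
    · exfalso
      have hz := (setIntegral_eq_zero_iff_of_nonneg_ae h0 (hcint.sub hidint)).1 heq.symm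
      have hnull : (μ₀.restrict S) {x | c - x ≠ 0} = 0 := by
        rw [Filter.eventuallyEq_iff_exists_mem] at hz
        obtain ⟨s, hs, hs'⟩ := hz
        rw [mem_ae_iff] at hs
        refine measure_mono_null ?_ hs
        intro x hx hxs
        exact hx (hs' hxs)
      have hN : MeasurableSet {x : ℝ | c - x ≠ 0} := by
        have : {x : ℝ | c - x ≠ 0} = {c}ᶜ := by ext x; simp [sub_eq_zero, eq_comm]
        rw [this]; exact (measurableSet_singleton c).compl
      rw [Measure.restrict_apply hN] at hnull
      have : μ₀ S ≤ μ₀ ({x : ℝ | c - x ≠ 0} ∩ S) + μ₀ {c} := by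
        refine le_trans (measure_mono ?_) (measure_union_le _ _)
        intro x hx
        rcases eq_or_ne x c with rfl | hne
        · exact Or.inr rfl
        · exact Or.inl ⟨by simp [sub_eq_zero, (Ne.symm hne)], hx⟩
      rw [hnull, GM.singleton hμ₀ c, add_zero] at this
      exact absurd (le_antisymm this zero_le) hμS.ne'
    · exact h
  rw [integral_sub hcint hidint, setIntegral_const, smul_eq_mul, measureReal_def] at hpos
  rw [div_lt_iff₀ hm]
  linarith

lemma avg_gt {S : Set ℝ} (hSm : MeasurableSet S) (hSsub : S ⊆ Icc a₀ b₀)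
    (hμS : 0 < μ₀ S) {c : ℝ} (hlb : ∀ x ∈ S, c ≤ x) :
    c < (∫ x in S, x ∂μ₀) / (μ₀ S).toReal := by
  haveI := hμ₀.1
  have hm : 0 < (μ₀ S).toReal := ENNReal.toReal_pos hμS.ne' (GM.finite hμ₀ S)
  have hidint : IntegrableOn (fun x : ℝ => x) S μ₀ :=
    GM.integrableOn hμ₀ continuous_id.continuousOn hSsub
  have hcint : IntegrableOn (fun _ : ℝ => c) S μ₀ :=
    integrableOn_const (measure_ne_top μ₀ S)
  have h0 : 0 ≤ᵐ[μ₀.restrict S] fun x => x - c :=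
    ae_restrict_of_forall_mem hSm fun x hx => sub_nonneg.2 (hlb x hx)
  have hpos : 0 < ∫ x in S, (x - c) ∂μ₀ := by
    rcases eq_or_lt_of_le (integral_nonneg_of_ae h0) with heq | h
    · exfalso
      have hz := (setIntegral_eq_zero_iff_of_nonneg_ae h0 (hidint.sub hcint)).1 heq.symm
      have hnull : (μ₀.restrict S) {x | x - c ≠ 0} = 0 := by
        rw [Filter.eventuallyEq_iff_exists_mem] at hz
        obtain ⟨s, hs, hs'⟩ := hz
        rw [mem_ae_iff] at hs
        refine measure_mono_null ?_ hs
        intro x hx hxs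
        exact hx (hs' hxs)
      have hN : MeasurableSet {x : ℝ | x - c ≠ 0} := by
        have : {x : ℝ | x - c ≠ 0} = {c}ᶜ := by ext x; simp [sub_eq_zero]
        rw [this]; exact (measurableSet_singleton c).compl
      rw [Measure.restrict_apply hN] at hnull
      have : μ₀ S ≤ μ₀ ({x : ℝ | x - c ≠ 0} ∩ S) + μ₀ {c} := by
        refine le_trans (measure_mono ?_) (measure_union_le _ _)
        intro x hx
        rcases eq_or_ne x c with rfl | hne
        · exact Or.inr rfl
        · exact Or.inl ⟨by simp [sub_eq_zero, hne], hx⟩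
      rw [hnull, GM.singleton hμ₀ c, add_zero] at this
      exact absurd (le_antisymm this zero_le) hμS.ne'
    · exact h
  rw [integral_sub hidint hcint, setIntegral_const, smul_eq_mul, measureReal_def] at hpos
  rw [lt_div_iff₀ hm]
  linarith

end avg

/-- implicit differentiation of a root branch `Y` of `ξ(x, Y(x)) = 0`. -/
lemma implicit_deriv {f g Y : ℝ → ℝ} {a₀ b₀ a₁ b₁ x₀ T G : ℝ}
    (hYmem : ∀ᶠ x in nhdsWithin x₀ (Icc a₀ b₀), Y x ∈ Icc a₁ b₁)
    (hYcont : Filter.Tendsto Y (nhdsWithin x₀ (Icc a₀ b₀)) (nhds (Y x₀)))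
    (hroot : ∀ᶠ x in nhdsWithin x₀ (Icc a₀ b₀), x * Y x - f x - g (Y x) = 0)
    (hroot₀ : x₀ * Y x₀ - f x₀ - g (Y x₀) = 0)
    (hfd : HasDerivWithinAt f T (Icc a₀ b₀) x₀)
    (hgd : HasDerivWithinAt g G (Icc a₁ b₁) (Y x₀))
    (hc : x₀ - G ≠ 0) :
    HasDerivWithinAt Y ((T - Y x₀) / (x₀ - G)) (Icc a₀ b₀) x₀ := by
  classical
  set l := nhdsWithin x₀ (Icc a₀ b₀) with hl
  set y₀ := Y x₀ with hy₀
  set c := x₀ - G with hcdef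
  set A : ℝ → ℝ := fun x => f x - f x₀ - (x - x₀) * T with hAdef
  set B : ℝ → ℝ := fun x => g (Y x) - g y₀ - (Y x - y₀) * G with hBdef
  have hA : A =o[l] (fun x => x - x₀) := by
    have := hasDerivWithinAt_iff_isLittleO.1 hfd
    simpa [hAdef, smul_eq_mul] using this
  have hBg : (fun y => g y - g y₀ - (y - y₀) * G) =o[nhdsWithin y₀ (Icc a₁ b₁)]
      (fun y => y - y₀) := by
    have := hasDerivWithinAt_iff_isLittleO.1 hgd
    simpa [smul_eq_mul] using this
  have hYt : Filter.Tendsto Y l (nhdsWithin y₀ (Icc a₁ b₁)) :=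
    tendsto_nhdsWithin_iff.2 ⟨hYcont, hYmem⟩
  have hB : B =o[l] (fun x => Y x - y₀) := hBg.comp_tendsto hYt
  have hId : ∀ᶠ x in l, c * (Y x - y₀) = (T - Y x) * (x - x₀) + A x + B x := by
    filter_upwards [hroot] with x hx
    simp only [hAdef, hBdef, hcdef]
    linear_combination hx - hroot₀
  -- step 1: Y x - y₀ = O(x - x₀)
  have hO : (fun x => Y x - y₀) =O[l] (fun x => x - x₀) := by
    set M : ℝ := |T| + (max |a₁| |b₁|) + |y₀| with hMdef
    have hM0 : 0 ≤ max |a₁| |b₁| := le_trans (abs_nonneg a₁) (le_max_left _ _)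
    have hTb : ∀ᶠ x in l, |T - Y x| ≤ M := by
      filter_upwards [hYmem] with x hx
      have : |Y x| ≤ max |a₁| |b₁| := by
        rw [abs_le]
        constructor
        · calc -(max |a₁| |b₁|) ≤ -|a₁| := by simp
            _ ≤ a₁ := neg_abs_le a₁
            _ ≤ Y x := hx.1
        · exact hx.2.trans ((le_abs_self b₁).trans (le_max_right _ _))
      calc |T - Y x| ≤ |T| + |Y x| := abs_sub _ _
        _ ≤ M := by simp only [hMdef]; linarith [abs_nonneg y₀]
    have hc2 : (0:ℝ) < |c| / 2 := by positivity
    have hBev : ∀ᶠ x in l, |B x| ≤ |c| / 2 * |Y x - y₀| := by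
      have := (Asymptotics.isLittleO_iff.1 hB) hc2
      simpa [Real.norm_eq_abs] using this
    have hAev : ∀ᶠ x in l, |A x| ≤ 1 * |x - x₀| := by
      have := (Asymptotics.isLittleO_iff.1 hA) one_pos
      simpa [Real.norm_eq_abs] using this
    rw [Asymptotics.isBigO_iff]
    refine ⟨(2 * (M + 1)) / |c|, ?_⟩
    filter_upwards [hId, hTb, hBev, hAev] with x h1 h2 h3 h4
    clear_value M A B c y₀
    rw [Real.norm_eq_abs, Real.norm_eq_abs]
    have habs : |c| * |Y x - y₀| ≤ |T - Y x| * |x - x₀| + |A x| + |B x| := by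
      rw [← abs_mul, h1]
      calc |(T - Y x) * (x - x₀) + A x + B x|
          ≤ |(T - Y x) * (x - x₀) + A x| + |B x| := abs_add_le _ _
        _ ≤ |(T - Y x) * (x - x₀)| + |A x| + |B x| := by
            linarith [abs_add_le ((T - Y x) * (x - x₀)) (A x)]
        _ = |T - Y x| * |x - x₀| + |A x| + |B x| := by rw [abs_mul]
    have hcpos : 0 < |c| := abs_pos.2 hc
    have hineq : |c| / 2 * |Y x - y₀| ≤ (M + 1) * |x - x₀| := by
      linarith [habs, h3, h4, mul_le_mul_of_nonneg_right h2 (abs_nonneg (x - x₀))]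
    rw [div_mul_eq_mul_div, le_div_iff₀ hcpos]
    linarith [hineq]
  -- step 2: upgrade B to little-o of (x - x₀), and handle the cross term
  have hB' : B =o[l] (fun x => x - x₀) := hB.trans_isBigO hO
  have h0 : Filter.Tendsto (fun x => y₀ - Y x) l (nhds 0) := by
    have := tendsto_const_nhds (x := y₀) (f := l) |>.sub hYcont
    simpa using this
  have ho1 : (fun x => (y₀ - Y x) * (x - x₀)) =o[l] (fun x => x - x₀) := by
    have h1 : (fun x => y₀ - Y x) =o[l] (fun _ => (1:ℝ)) :=
      (Asymptotics.isLittleO_one_iff ℝ).2 h0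
    have h2 := h1.mul_isBigO (Asymptotics.isBigO_refl (fun x => x - x₀) l)
    refine h2.congr (fun x => rfl) (fun x => one_mul _)
  have hsum : (fun x => (y₀ - Y x) * (x - x₀) + A x + B x) =o[l] (fun x => x - x₀) :=
    (ho1.add hA).add hB'
  have hdiv : (fun x => (1 / c) * ((y₀ - Y x) * (x - x₀) + A x + B x)) =o[l]
      (fun x => x - x₀) := hsum.const_mul_left (1 / c)
  rw [hasDerivWithinAt_iff_isLittleO]
  refine hdiv.congr' ?_ (Filter.EventuallyEq.refl _ _)
  filter_upwards [hId] with x hx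
  rw [smul_eq_mul]
  clear_value A B c y₀
  rw [← hy₀]
  field_simp
  linear_combination -hx

end SX

theorem stmt3
    (a₀ b₀ a₁ b₁ lam Lam : ℝ) (μ₀ μ₁ : Measure ℝ) (u₀ u₁ : ℝ → ℝ)
    (hab₀ : a₀ < b₀) (hab₁ : a₁ < b₁) (hlam : 0 < lam)
    (hμ₀ : IsGoodMarginal μ₀ u₀ a₀ b₀ lam Lam)
    (hμ₁ : IsGoodMarginal μ₁ u₁ a₁ b₁ lam Lam)
    (ε : ℝ) (hε : 0 < ε) (f g : ℝ → ℝ)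
    (hfg : IsPotentialPair μ₀ μ₁ a₀ b₀ a₁ b₁ ε f g)
    (hsmall : ∀ x ∈ Icc a₀ b₀, (volume (secX f g a₁ b₁ x)).toReal ≤ (b₁ - a₁) / 3) :
    ∀ x ∈ Icc a₀ b₀,
      ((x * a₁ - f x - g a₁ < 0 ↔ a₁ < ymF f g a₁ b₁ x) ∧
        (x * a₁ - f x - g a₁ < 0 →
          ymF f g a₁ b₁ x < Tmap μ₁ f g a₁ b₁ x ∧
          Gmap μ₀ f g a₀ b₀ (ymF f g a₁ b₁ x) < x ∧
          0 < (Tmap μ₁ f g a₁ b₁ x - ymF f g a₁ b₁ x) /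
              (x - Gmap μ₀ f g a₀ b₀ (ymF f g a₁ b₁ x)) ∧
          HasDerivWithinAt (ymF f g a₁ b₁)
            ((Tmap μ₁ f g a₁ b₁ x - ymF f g a₁ b₁ x) /
              (x - Gmap μ₀ f g a₀ b₀ (ymF f g a₁ b₁ x))) (Icc a₀ b₀) x)) ∧
      ((x * b₁ - f x - g b₁ < 0 ↔ yMF f g a₁ b₁ x < b₁) ∧
        (x * b₁ - f x - g b₁ < 0 →
          0 < (Tmap μ₁ f g a₁ b₁ x - yMF f g a₁ b₁ x) /
              (x - Gmap μ₀ f g a₀ b₀ (yMF f g a₁ b₁ x)) ∧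
          HasDerivWithinAt (yMF f g a₁ b₁)
            ((Tmap μ₁ f g a₁ b₁ x - yMF f g a₁ b₁ x) /
              (x - Gmap μ₀ f g a₀ b₀ (yMF f g a₁ b₁ x))) (Icc a₀ b₀) x)) := by
  obtain ⟨hLf, hLg, hE1, hE2⟩ := hfg
  obtain ⟨Kf, hKf⟩ := hLf
  obtain ⟨Kg, hKg⟩ := hLg
  have hf : ContinuousOn f (Icc a₀ b₀) := hKf.continuousOn
  have hg : ContinuousOn g (Icc a₁ b₁) := hKg.continuousOn
  have hE2' : ∀ y ∈ Icc a₁ b₁, ∫ x in Icc a₀ b₀, max (y * x - g y - f x) 0 ∂μ₀ = ε := by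
    intro y hy
    rw [← hE2 y hy]
    refine setIntegral_congr_fun measurableSet_Icc fun x _ => ?_
    ring_nf
  have gsub : ∀ y ∈ Icc a₁ b₁, ∀ y' ∈ Icc a₁ b₁,
      Tmap μ₀ g f a₀ b₀ y * (y' - y) ≤ g y' - g y :=
    fun y hy y' hy' => SX.subgrad hμ₀ hε hf hE2' hy hy'
  have fsub : ∀ x ∈ Icc a₀ b₀, ∀ x' ∈ Icc a₀ b₀,
      Tmap μ₁ f g a₁ b₁ x * (x' - x) ≤ f x' - f x :=
    fun x hx x' hx' => SX.subgrad hμ₁ hε hg hE1 hx hx'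
  intro x hx
  have hEx := hE1 x hx
  have hymIcc := (SX.ym_mem hμ₁ hε hg hEx).1
  have hyMIcc := (SX.yM_mem hμ₁ hε hg hEx).1
  have hTIoo := SX.Tmap_mem_Ioo gsub hμ₁ hε hg hEx hlam
  have hfd : HasDerivWithinAt f (Tmap μ₁ f g a₁ b₁ x) (Icc a₀ b₀) x :=
    SX.f_hasDeriv gsub hμ₁ hε hlam hg hf hE1 hx
  constructor
  · refine ⟨SX.lt_iff_lower hμ₁ hε hg hEx hab₁.le, ?_⟩
    intro h
    have hym : a₁ < ymF f g a₁ b₁ x := (SX.lt_iff_lower hμ₁ hε hg hEx hab₁.le).1 h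
    have hξ0 : x * ymF f g a₁ b₁ x - f x - g (ymF f g a₁ b₁ x) = 0 :=
      SX.xi_ym_eq_zero hμ₁ hε hg hEx hym
    have hT1 : ymF f g a₁ b₁ x < Tmap μ₁ f g a₁ b₁ x := hTIoo.1
    have hμS' : 0 < μ₀ (secX g f a₀ b₀ (ymF f g a₁ b₁ x)) :=
      SX.measure_pos hμ₀ hε hf (hE2' _ hymIcc)
    have hub : ∀ x' ∈ secX g f a₀ b₀ (ymF f g a₁ b₁ x), x' ≤ x := by
      intro x' hx'
      by_contra hcc
      push_neg at hcc
      have hfs := fsub x hx x' hx'.1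
      have hneg : (ymF f g a₁ b₁ x - Tmap μ₁ f g a₁ b₁ x) * (x' - x) < 0 :=
        mul_neg_of_neg_of_pos (by linarith) (by linarith)
      nlinarith [hx'.2, hfs, hξ0, hneg]
    have hGlt : Gmap μ₀ f g a₀ b₀ (ymF f g a₁ b₁ x) < x := by
      rw [SX.Gmap_eq]
      exact SX.avg_lt hμ₀ (SX.measurableSet hf _) (SX.subset _) hμS' hub
    refine ⟨hT1, hGlt, div_pos (by linarith) (by linarith), ?_⟩
    have hgd : HasDerivWithinAt g (Gmap μ₀ f g a₀ b₀ (ymF f g a₁ b₁ x)) (Icc a₁ b₁)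
        (ymF f g a₁ b₁ x) := by
      rw [SX.Gmap_eq]
      exact SX.f_hasDeriv fsub hμ₀ hε hlam hf hg hE2' hymIcc
    have hYcont := SX.ym_tendsto gsub hμ₁ hε hlam hg hf hE1 hx
    have hYmem : ∀ᶠ x' in nhdsWithin x (Icc a₀ b₀), ymF f g a₁ b₁ x' ∈ Icc a₁ b₁ := by
      filter_upwards [self_mem_nhdsWithin] with x' hx'
      exact (SX.ym_mem hμ₁ hε hg (hE1 x' hx')).1
    have hroot : ∀ᶠ x' in nhdsWithin x (Icc a₀ b₀),
        x' * ymF f g a₁ b₁ x' - f x' - g (ymF f g a₁ b₁ x') = 0 := by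
      filter_upwards [self_mem_nhdsWithin,
        hYcont.eventually (eventually_gt_nhds hym)] with x' hx' hgt
      exact SX.xi_ym_eq_zero hμ₁ hε hg (hE1 x' hx') hgt
    exact SX.implicit_deriv hYmem hYcont hroot hξ0 hfd hgd (by linarith : (0:ℝ) <
      x - Gmap μ₀ f g a₀ b₀ (ymF f g a₁ b₁ x)).ne'
  · refine ⟨SX.lt_iff_upper hμ₁ hε hg hEx hab₁.le, ?_⟩
    intro h
    have hyM : yMF f g a₁ b₁ x < b₁ := (SX.lt_iff_upper hμ₁ hε hg hEx hab₁.le).1 h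
    have hξ0 : x * yMF f g a₁ b₁ x - f x - g (yMF f g a₁ b₁ x) = 0 :=
      SX.xi_yM_eq_zero hμ₁ hε hg hEx hyM
    have hT2 : Tmap μ₁ f g a₁ b₁ x < yMF f g a₁ b₁ x := hTIoo.2
    have hμS' : 0 < μ₀ (secX g f a₀ b₀ (yMF f g a₁ b₁ x)) :=
      SX.measure_pos hμ₀ hε hf (hE2' _ hyMIcc)
    have hlb : ∀ x' ∈ secX g f a₀ b₀ (yMF f g a₁ b₁ x), x ≤ x' := by
      intro x' hx'
      by_contra hcc
      push_neg at hcc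
      have hfs := fsub x hx x' hx'.1
      have hneg : (yMF f g a₁ b₁ x - Tmap μ₁ f g a₁ b₁ x) * (x' - x) < 0 :=
        mul_neg_of_pos_of_neg (by linarith) (by linarith)
      nlinarith [hx'.2, hfs, hξ0, hneg]
    have hGgt : x < Gmap μ₀ f g a₀ b₀ (yMF f g a₁ b₁ x) := by
      rw [SX.Gmap_eq]
      exact SX.avg_gt hμ₀ (SX.measurableSet hf _) (SX.subset _) hμS' hlb
    refine ⟨div_pos_of_neg_of_neg (by linarith) (by linarith), ?_⟩
    have hgd : HasDerivWithinAt g (Gmap μ₀ f g a₀ b₀ (yMF f g a₁ b₁ x)) (Icc a₁ b₁)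
        (yMF f g a₁ b₁ x) := by
      rw [SX.Gmap_eq]
      exact SX.f_hasDeriv fsub hμ₀ hε hlam hf hg hE2' hyMIcc
    have hYcont := SX.yM_tendsto gsub hμ₁ hε hlam hg hf hE1 hx
    have hYmem : ∀ᶠ x' in nhdsWithin x (Icc a₀ b₀), yMF f g a₁ b₁ x' ∈ Icc a₁ b₁ := by
      filter_upwards [self_mem_nhdsWithin] with x' hx'
      exact (SX.yM_mem hμ₁ hε hg (hE1 x' hx')).1
    have hroot : ∀ᶠ x' in nhdsWithin x (Icc a₀ b₀),
        x' * yMF f g a₁ b₁ x' - f x' - g (yMF f g a₁ b₁ x') = 0 := by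
      filter_upwards [self_mem_nhdsWithin,
        hYcont.eventually (eventually_lt_nhds hyM)] with x' hx' hgt
      exact SX.xi_yM_eq_zero hμ₁ hε hg (hE1 x' hx') hgt
    exact SX.implicit_deriv hYmem hYcont hroot hξ0 hfd hgd (by linarith : x -
      Gmap μ₀ f g a₀ b₀ (yMF f g a₁ b₁ x) < 0).ne
end
end

section
/- Let ε > 0 and let (f, g) be a pair of ε-potentials. Then for every x ∈ Ω₀: ε/Λ ≤ (max_{y ∈ Ω₁} ξ(x, y)) · |S_x| ≤ 2ε/λ. -/
open MeasureTheory Set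
open scoped Classical ENNReal NNReal

noncomputable section

lemma integrableOn_of_bdd' {f : ℝ → ℝ} {s : Set ℝ} {μ : Measure ℝ} (hs : MeasurableSet s)
    (hμ : μ s ≠ ⊤) (hsm : AEStronglyMeasurable f (μ.restrict s)) {C : ℝ}
    (hb : ∀ x ∈ s, |f x| ≤ C) : IntegrableOn f s μ := by
  haveI : IsFiniteMeasure (μ.restrict s) :=
    ⟨by rw [Measure.restrict_apply_univ]; exact lt_top_iff_ne_top.2 hμ⟩
  refine ⟨hsm, MeasureTheory.HasFiniteIntegral.of_bounded (C := C) ?_⟩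
  exact (ae_restrict_iff' hs).2 (Filter.Eventually.of_forall fun x hx => by
    simpa [Real.norm_eq_abs] using hb x hx)

/-- convert set integral wrt a good-marginal measure into a Lebesgue integral with density. -/
lemma integral_goodMarginal {μ : Measure ℝ} {u : ℝ → ℝ} {a b lam Lam : ℝ}
    (hc : ContinuousOn u (Icc a b))
    (hbd : ∀ x ∈ Icc a b, lam ≤ u x ∧ u x ≤ Lam) (hlam : 0 < lam)
    (hd : μ = (volume.restrict (Icc a b)).withDensity (fun x => ENNReal.ofReal (u x)))
    (φ : ℝ → ℝ) :
    ∫ y in Icc a b, φ y ∂μ = ∫ y in Icc a b, u y * φ y := by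
  have h1 : μ.restrict (Icc a b) = μ := by
    rw [hd, restrict_withDensity measurableSet_Icc, Measure.restrict_restrict measurableSet_Icc,
      inter_self]
  have haem : AEMeasurable (fun y => Real.toNNReal (u y)) (volume.restrict (Icc a b)) :=
    measurable_real_toNNReal.comp_aemeasurable (hc.aemeasurable measurableSet_Icc)
  calc ∫ y in Icc a b, φ y ∂μ = ∫ y, φ y ∂(μ.restrict (Icc a b)) := rfl
    _ = ∫ y, φ y ∂μ := by rw [h1]
    _ = ∫ y, φ y ∂((volume.restrict (Icc a b)).withDensity
          (fun x => ((Real.toNNReal (u x) : ℝ≥0) : ℝ≥0∞))) := by rw [hd]; rfl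
    _ = ∫ y, (Real.toNNReal (u y)) • φ y ∂(volume.restrict (Icc a b)) :=
        integral_withDensity_eq_integral_smul₀ haem φ
    _ = ∫ y in Icc a b, u y * φ y := by
        refine integral_congr_ae ((ae_restrict_iff' measurableSet_Icc).2
          (Filter.Eventually.of_forall fun y hy => ?_))
        have h0 : (0:ℝ) ≤ u y := hlam.le.trans (hbd y hy).1
        simp [NNReal.smul_def, Real.coe_toNNReal _ h0]

lemma half_left {h : ℝ → ℝ} {p r : ℝ} (hpr : p ≤ r) (hconc : ConcaveOn ℝ (Icc p r) h)
    (hcont : ContinuousOn h (Icc p r)) (hp : 0 ≤ h p) :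
    h r * (r - p) / 2 ≤ ∫ y in p..r, h y := by
  rcases eq_or_lt_of_le hpr with rfl | hlt
  · simp
  have hint : IntervalIntegrable h volume p r :=
    (hcont.mono (by rw [uIcc_of_le hpr])).intervalIntegrable
  have hrp : (0:ℝ) < r - p := by linarith
  have hpt : ∀ y ∈ Icc p r, h r * ((y - p)/(r - p)) ≤ h y := by
    intro y hy
    have ha : (0:ℝ) ≤ (r - y)/(r - p) := div_nonneg (by linarith [hy.2]) hrp.le
    have hb : (0:ℝ) ≤ (y - p)/(r - p) := div_nonneg (by linarith [hy.1]) hrp.le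
    have hab : (r - y)/(r - p) + (y - p)/(r - p) = 1 := by field_simp; ring
    have hco := hconc.2 (left_mem_Icc.2 hpr) (right_mem_Icc.2 hpr) ha hb hab
    have hyy : ((r - y)/(r - p)) • p + ((y - p)/(r - p)) • r = y := by
      simp only [smul_eq_mul]; field_simp; ring
    rw [hyy] at hco
    simp only [smul_eq_mul] at hco
    nlinarith [mul_nonneg ha hp]
  have hmono := intervalIntegral.integral_mono_on hpr
    (Continuous.intervalIntegrable (by continuity) p r) hint hpt
  refine le_trans (le_of_eq ?_) hmono
  have : ∀ y : ℝ, h r * ((y - p)/(r - p)) = (h r / (r - p)) * (y - p) := by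
    intro y; field_simp
  simp_rw [this]
  rw [intervalIntegral.integral_const_mul]
  have : ∫ y in p..r, (y - p) = ∫ y in (0:ℝ)..(r - p), y := by
    have := intervalIntegral.integral_comp_sub_right (fun y => y) p (a := p) (b := r)
    simpa using this
  rw [this, integral_id]
  field_simp; ring

lemma half_right {h : ℝ → ℝ} {p r : ℝ} (hpr : p ≤ r) (hconc : ConcaveOn ℝ (Icc p r) h)
    (hcont : ContinuousOn h (Icc p r)) (hr : 0 ≤ h r) :
    h p * (r - p) / 2 ≤ ∫ y in p..r, h y := by
  rcases eq_or_lt_of_le hpr with rfl | hlt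
  · simp
  have hint : IntervalIntegrable h volume p r :=
    (hcont.mono (by rw [uIcc_of_le hpr])).intervalIntegrable
  have hrp : (0:ℝ) < r - p := by linarith
  have hpt : ∀ y ∈ Icc p r, h p * ((r - y)/(r - p)) ≤ h y := by
    intro y hy
    have ha : (0:ℝ) ≤ (r - y)/(r - p) := div_nonneg (by linarith [hy.2]) hrp.le
    have hb : (0:ℝ) ≤ (y - p)/(r - p) := div_nonneg (by linarith [hy.1]) hrp.le
    have hab : (r - y)/(r - p) + (y - p)/(r - p) = 1 := by field_simp; ring
    have hco := hconc.2 (left_mem_Icc.2 hpr) (right_mem_Icc.2 hpr) ha hb hab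
    have hyy : ((r - y)/(r - p)) • p + ((y - p)/(r - p)) • r = y := by
      simp only [smul_eq_mul]; field_simp; ring
    rw [hyy] at hco
    simp only [smul_eq_mul] at hco
    nlinarith [mul_nonneg hb hr]
  have hmono := intervalIntegral.integral_mono_on hpr
    (Continuous.intervalIntegrable (by continuity) p r) hint hpt
  refine le_trans (le_of_eq ?_) hmono
  have : ∀ y : ℝ, h p * ((r - y)/(r - p)) = (h p / (r - p)) * (r - y) := by
    intro y; field_simp
  simp_rw [this]
  rw [intervalIntegral.integral_const_mul]
  have : ∫ y in p..r, (r - y) = ∫ y in (0:ℝ)..(r - p), y := by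
    have := intervalIntegral.integral_comp_sub_left (fun y => y) r (a := p) (b := r)
    simpa using this
  rw [this, integral_id]
  field_simp; ring

/-- triangle bound: a nonnegative concave function attaining value `h m` has
integral at least `h m * (q-p)/2`. -/
lemma concave_integral_triangle {h : ℝ → ℝ} {p q m : ℝ} (hpq : p ≤ q) (hm : m ∈ Icc p q)
    (hconc : ConcaveOn ℝ (Icc p q) h) (hcont : ContinuousOn h (Icc p q))
    (hp : 0 ≤ h p) (hq : 0 ≤ h q) :
    h m * (q - p) / 2 ≤ ∫ y in Icc p q, h y := by
  have hIcc1 : Icc p m ⊆ Icc p q := Icc_subset_Icc le_rfl hm.2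
  have hIcc2 : Icc m q ⊆ Icc p q := Icc_subset_Icc hm.1 le_rfl
  have h1 : h m * (m - p) / 2 ≤ ∫ y in p..m, h y :=
    half_left hm.1 (hconc.subset hIcc1 (convex_Icc _ _)) (hcont.mono hIcc1) hp
  have h2 : h m * (q - m) / 2 ≤ ∫ y in m..q, h y :=
    half_right hm.2 (hconc.subset hIcc2 (convex_Icc _ _)) (hcont.mono hIcc2) hq
  have hi1 : IntervalIntegrable h volume p m :=
    ((hcont.mono hIcc1).mono (by rw [uIcc_of_le hm.1])).intervalIntegrable
  have hi2 : IntervalIntegrable h volume m q :=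
    ((hcont.mono hIcc2).mono (by rw [uIcc_of_le hm.2])).intervalIntegrable
  have hsplit := intervalIntegral.integral_add_adjacent_intervals hi1 hi2
  have heq : ∫ y in Icc p q, h y = ∫ y in p..q, h y := by
    rw [intervalIntegral.integral_of_le hpq, integral_Icc_eq_integral_Ioc]
  rw [heq, ← hsplit]
  nlinarith [h1, h2]

lemma max_combo {a b t s : ℝ} (ht : 0 ≤ t) (hs : 0 ≤ s) :
    max (t*a + s*b) 0 ≤ t * max a 0 + s * max b 0 := by
  have h1 : t*a ≤ t * max a 0 := mul_le_mul_of_nonneg_left (le_max_left _ _) ht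
  have h2 : s*b ≤ s * max b 0 := mul_le_mul_of_nonneg_left (le_max_left _ _) hs
  have h3 : (0:ℝ) ≤ t * max a 0 + s * max b 0 :=
    add_nonneg (mul_nonneg ht (le_max_right _ _)) (mul_nonneg hs (le_max_right _ _))
  exact max_le (by linarith) h3

lemma g_convexOn {a₀ b₀ a₁ b₁ ε : ℝ} {μ₀ : Measure ℝ} [IsFiniteMeasure μ₀]
    (hab₀ : a₀ ≤ b₀) (hε : 0 < ε) {f g : ℝ → ℝ} (hf : ContinuousOn f (Icc a₀ b₀))
    (heq : ∀ y ∈ Icc a₁ b₁, ∫ x in Icc a₀ b₀, max (x * y - f x - g y) 0 ∂μ₀ = ε) :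
    ConvexOn ℝ (Icc a₁ b₁) g := by
  set I₀ := Icc a₀ b₀ with hI₀
  have hcξ : ∀ (w c : ℝ), ContinuousOn (fun x => max (x*w - f x - c) 0) I₀ := by
    intro w c
    exact (((continuous_id.mul continuous_const).continuousOn.sub hf).sub
      continuousOn_const).sup continuousOn_const
  have hint : ∀ (w c : ℝ), IntegrableOn (fun x => max (x*w - f x - c) 0) I₀ μ₀ := by
    intro w c
    exact ContinuousOn.integrableOn_compact isCompact_Icc (hcξ w c)
  refine ⟨convex_Icc _ _, ?_⟩
  intro y hy z hz t s ht hs hts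
  by_contra hlt
  push_neg at hlt
  simp only [smul_eq_mul] at hlt ⊢
  set w := t*y + s*z with hw
  have hwmem : w ∈ Icc a₁ b₁ := by
    have := (convex_Icc a₁ b₁) hy hz ht hs hts
    simpa [smul_eq_mul] using this
  set c := t * g y + s * g z with hc
  -- step 1 : F(w, c) ≤ ε
  have key1 : ∀ x ∈ I₀, max (x*w - f x - c) 0
      ≤ t * max (x*y - f x - g y) 0 + s * max (x*z - f x - g z) 0 := by
    intro x hx
    have hxw : x*w - f x - c = t*(x*y - f x - g y) + s*(x*z - f x - g z) := by
      rw [hw, hc]; linear_combination (f x) * hts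
    rw [hxw]
    exact max_combo ht hs
  have hF : ∫ x in I₀, max (x*w - f x - c) 0 ∂μ₀ ≤ ε := by
    have := setIntegral_mono_on
      (g := fun x => t * max (x*y - f x - g y) 0 + s * max (x*z - f x - g z) 0) (hint w c)
      (((hint y (g y)).const_mul t).add ((hint z (g z)).const_mul s)) measurableSet_Icc key1
    rw [integral_add ((hint y (g y)).const_mul t) ((hint z (g z)).const_mul s),
      integral_const_mul, integral_const_mul, heq y hy, heq z hz] at this
    nlinarith [this, hts]
  -- the section at w
  set S := {x ∈ I₀ | 0 ≤ x*w - f x - g w} with hS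
  have hSclosed : IsClosed S := by
    have : S = I₀ ∩ (fun x => x*w - f x - g w) ⁻¹' (Ici 0) := by
      ext x; simp [hS, mem_sep_iff]
    rw [this]
    exact ContinuousOn.preimage_isClosed_of_isClosed
      (((continuous_id.mul continuous_const).continuousOn.sub hf).sub continuousOn_const)
      isClosed_Icc isClosed_Ici
  have hSmeas : MeasurableSet S := hSclosed.measurableSet
  have hSsub : S ⊆ I₀ := fun x hx => hx.1
  have hSμ : μ₀ S ≠ ⊤ := measure_ne_top _ _
  -- μ₀ S > 0
  have hμSpos : 0 < (μ₀ S).toReal := by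
    obtain ⟨x₀, hx₀, hmax⟩ := isCompact_Icc.exists_isMaxOn (s := I₀)
      (Set.nonempty_Icc.2 hab₀) (hcξ w (g w))
    set C := max (x₀*w - f x₀ - g w) 0 with hC
    have hCnn : 0 ≤ C := le_max_right _ _
    have hpt : ∀ x ∈ I₀, max (x*w - f x - g w) 0 ≤ S.indicator (fun _ => C) x := by
      intro x hx
      by_cases hxS : x ∈ S
      · rw [Set.indicator_of_mem hxS]; exact hmax hx
      · rw [Set.indicator_of_notMem hxS]
        have : ¬ (0 ≤ x*w - f x - g w) := fun h => hxS ⟨hx, h⟩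
        rw [max_eq_right (le_of_not_ge this)]
    have hindint : IntegrableOn (S.indicator (fun _ => C)) I₀ μ₀ := by
      rw [IntegrableOn, integrable_indicator_iff hSmeas]
      exact integrableOn_const (measure_lt_top _ _).ne
    have hle := setIntegral_mono_on (hint w (g w)) hindint measurableSet_Icc hpt
    rw [heq w hwmem, setIntegral_indicator hSmeas,
      inter_eq_self_of_subset_right hSsub, setIntegral_const, smul_eq_mul, measureReal_def] at hle
    by_contra hcon
    push_neg at hcon
    have : (μ₀ S).toReal = 0 := le_antisymm hcon ENNReal.toReal_nonneg
    rw [this, zero_mul] at hle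
    linarith
  -- step 2 : strict inequality
  set δ := g w - c with hδ
  have hδpos : 0 < δ := sub_pos.2 hlt
  have key2 : ∀ x ∈ I₀, max (x*w - f x - g w) 0 + S.indicator (fun _ => δ) x
      ≤ max (x*w - f x - c) 0 := by
    intro x hx
    by_cases hxS : x ∈ S
    · rw [Set.indicator_of_mem hxS]
      have h0 : 0 ≤ x*w - f x - g w := hxS.2
      rw [max_eq_left h0]
      have : x*w - f x - g w + δ = x*w - f x - c := by rw [hδ]; ring
      rw [this]
      exact le_max_left _ _
    · rw [Set.indicator_of_notMem hxS, add_zero]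
      exact max_le_max (by linarith [hlt]) le_rfl
  have hindint : IntegrableOn (S.indicator (fun _ => δ)) I₀ μ₀ := by
    rw [IntegrableOn, integrable_indicator_iff hSmeas]
    exact integrableOn_const (measure_lt_top _ _).ne
  have hle2 := setIntegral_mono_on
    (f := fun x => max (x*w - f x - g w) 0 + S.indicator (fun _ => δ) x)
    ((hint w (g w)).add hindint) (hint w c)
    measurableSet_Icc key2
  rw [integral_add (hint w (g w)) hindint, heq w hwmem,
    setIntegral_indicator hSmeas, inter_eq_self_of_subset_right hSsub,
    setIntegral_const, smul_eq_mul, measureReal_def] at hle2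
  nlinarith [hle2, hF, hμSpos, hδpos]

theorem stmt5
    (a₀ b₀ a₁ b₁ lam Lam : ℝ) (μ₀ μ₁ : Measure ℝ) (u₀ u₁ : ℝ → ℝ)
    (hab₀ : a₀ < b₀) (hab₁ : a₁ < b₁) (hlam : 0 < lam)
    (hμ₀ : IsGoodMarginal μ₀ u₀ a₀ b₀ lam Lam)
    (hμ₁ : IsGoodMarginal μ₁ u₁ a₁ b₁ lam Lam)
    (ε : ℝ) (hε : 0 < ε) (f g : ℝ → ℝ)
    (hfg : IsPotentialPair μ₀ μ₁ a₀ b₀ a₁ b₁ ε f g) :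
    ∀ x ∈ Icc a₀ b₀,
      ε / Lam ≤ sSup ((fun y => x * y - f x - g y) '' Icc a₁ b₁) *
          (volume (secX f g a₁ b₁ x)).toReal ∧
      sSup ((fun y => x * y - f x - g y) '' Icc a₁ b₁) *
          (volume (secX f g a₁ b₁ x)).toReal ≤ 2 * ε / lam := by
  obtain ⟨hprob₀, hd₀, hc₀, hb₀⟩ := hμ₀
  obtain ⟨hprob₁, hd₁, hc₁, hb₁⟩ := hμ₁
  haveI := hprob₀; haveI := hprob₁
  obtain ⟨⟨K₀, hfL⟩, ⟨K₁, hgL⟩, heqX, heqY⟩ := hfg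
  have hf_cont : ContinuousOn f (Icc a₀ b₀) := hfL.continuousOn
  have hg_cont : ContinuousOn g (Icc a₁ b₁) := hgL.continuousOn
  have hΛ : 0 < Lam := lt_of_lt_of_le hlam
    ((hb₁ a₁ ⟨le_rfl, hab₁.le⟩).1.trans (hb₁ a₁ ⟨le_rfl, hab₁.le⟩).2)
  have hgconv : ConvexOn ℝ (Icc a₁ b₁) g := g_convexOn hab₀.le hε hf_cont heqY
  intro x hx
  set ξ : ℝ → ℝ := fun y => x * y - f x - g y with hξdef
  have hξcont : ContinuousOn ξ (Icc a₁ b₁) :=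
    ((continuous_const.mul continuous_id).continuousOn.sub continuousOn_const).sub hg_cont
  have hmcont : ContinuousOn (fun y => max (ξ y) 0) (Icc a₁ b₁) := hξcont.sup continuousOn_const
  have hξconc : ConcaveOn ℝ (Icc a₁ b₁) ξ := by
    refine ⟨convex_Icc _ _, ?_⟩
    intro y hy z hz t s ht hs hts
    have hgc := hgconv.2 hy hz ht hs hts
    simp only [smul_eq_mul, hξdef] at hgc ⊢
    have hD : x*(t*y+s*z) - f x - g (t*y+s*z)
        - (t * (x*y - f x - g y) + s * (x*z - f x - g z))
        = (t * g y + s * g z - g (t*y+s*z)) + (t + s - 1) * f x := by ring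
    have hts' : (t + s - 1) * f x = 0 := by rw [hts]; ring
    linarith [hgc, hD, hts']
  have hε₁ : ∫ y in Icc a₁ b₁, max (ξ y) 0 ∂μ₁ = ε := heqX x hx
  have hεconv : ε = ∫ y in Icc a₁ b₁, u₁ y * max (ξ y) 0 := by
    rw [← hε₁]; exact integral_goodMarginal hc₁ hb₁ hlam hd₁ _
  have hex : ∃ y₀ ∈ Icc a₁ b₁, 0 < ξ y₀ := by
    by_contra hcon
    push_neg at hcon
    have hzero : ∫ y in Icc a₁ b₁, max (ξ y) 0 ∂μ₁ = 0 := by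
      rw [setIntegral_congr_fun measurableSet_Icc (g := fun _ => (0:ℝ))
        (fun y hy => max_eq_right (hcon y hy))]
      simp
    rw [hε₁] at hzero
    linarith
  obtain ⟨y₀, hy₀mem, hy₀pos⟩ := hex
  obtain ⟨ystar, hystar, hmax⟩ := isCompact_Icc.exists_isMaxOn (nonempty_Icc.2 hab₁.le) hξcont
  have hMpos : 0 < ξ ystar := lt_of_lt_of_le hy₀pos (hmax hy₀mem)
  have hMattain : sSup (ξ '' Icc a₁ b₁) = ξ ystar := by
    apply le_antisymm
    · exact csSup_le ((nonempty_Icc.2 hab₁.le).image _)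
        (by rintro _ ⟨y, hy, rfl⟩; exact hmax hy)
    · exact le_csSup (isCompact_Icc.image_of_continuousOn hξcont).bddAbove ⟨ystar, hystar, rfl⟩
  set S := secX f g a₁ b₁ x with hSdef
  have hSdesc : S = Icc a₁ b₁ ∩ ξ ⁻¹' (Ici 0) := by
    ext y
    simp only [hSdef, secX, mem_sep_iff, mem_inter_iff, mem_preimage, mem_Ici, hξdef]
  have hSclosed : IsClosed S := by
    rw [hSdesc]
    exact hξcont.preimage_isClosed_of_isClosed isClosed_Icc isClosed_Ici
  have hSmeas : MeasurableSet S := hSclosed.measurableSet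
  have hSsub : S ⊆ Icc a₁ b₁ := fun y hy => hy.1
  have hScomp : IsCompact S := isCompact_Icc.of_isClosed_subset hSclosed hSsub
  have hystarS : ystar ∈ S := ⟨hystar, hMpos.le⟩
  have hSne : S.Nonempty := ⟨ystar, hystarS⟩
  set p := sInf S with hpdef
  set q := sSup S with hqdef
  have hpmem : p ∈ S := hScomp.sInf_mem hSne
  have hqmem : q ∈ S := hScomp.sSup_mem hSne
  have hpq : p ≤ q := csInf_le hScomp.bddBelow hqmem
  have hSconv : Convex ℝ S := by
    intro y hy z hz t s ht hs hts
    have hmem : t • y + s • z ∈ Icc a₁ b₁ := (convex_Icc a₁ b₁) (hSsub hy) (hSsub hz) ht hs hts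
    have hcc := hξconc.2 (hSsub hy) (hSsub hz) ht hs hts
    have h0 : 0 ≤ ξ (t • y + s • z) :=
      le_trans (add_nonneg (smul_nonneg ht hy.2) (smul_nonneg hs hz.2)) hcc
    exact ⟨hmem, h0⟩
  have hSIcc : S = Icc p q := by
    apply Subset.antisymm
    · exact fun y hy => ⟨csInf_le hScomp.bddBelow hy, le_csSup hScomp.bddAbove hy⟩
    · rw [← segment_eq_Icc hpq]
      exact hSconv.segment_subset hpmem hqmem
  have hvol : (volume S).toReal = q - p := by
    rw [hSIcc, Real.volume_Icc, ENNReal.toReal_ofReal (sub_nonneg.2 hpq)]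
  have hIpq_sub : Icc p q ⊆ Icc a₁ b₁ := hSIcc ▸ hSsub
  have hystarIcc : ystar ∈ Icc p q := hSIcc ▸ hystarS
  have hvolI₁ : volume (Icc a₁ b₁) ≠ ⊤ := by simp [Real.volume_Icc]
  have haesm : AEStronglyMeasurable (fun y => u₁ y * max (ξ y) 0)
      (volume.restrict (Icc a₁ b₁)) :=
    (hc₁.aestronglyMeasurable measurableSet_Icc).mul (hmcont.aestronglyMeasurable measurableSet_Icc)
  have hboundpt : ∀ y ∈ Icc a₁ b₁, u₁ y * max (ξ y) 0 ≤ Lam * ξ ystar := by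
    intro y hy
    exact mul_le_mul (hb₁ y hy).2 (max_le (hmax hy) hMpos.le) (le_max_right _ _) hΛ.le
  have hnnpt : ∀ y ∈ Icc a₁ b₁, 0 ≤ u₁ y * max (ξ y) 0 := fun y hy =>
    mul_nonneg (hlam.le.trans (hb₁ y hy).1) (le_max_right _ _)
  have hint1 : IntegrableOn (fun y => u₁ y * max (ξ y) 0) (Icc a₁ b₁) volume :=
    integrableOn_of_bdd' measurableSet_Icc hvolI₁ haesm (C := Lam * ξ ystar)
      (fun y hy => by rw [abs_of_nonneg (hnnpt y hy)]; exact hboundpt y hy)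
  constructor
  · -- lower bound
    have hub : ∀ y ∈ Icc a₁ b₁, u₁ y * max (ξ y) 0
        ≤ S.indicator (fun _ => Lam * ξ ystar) y := by
      intro y hy
      by_cases hyS : y ∈ S
      · rw [indicator_of_mem hyS]
        exact hboundpt y hy
      · rw [indicator_of_notMem hyS]
        have hneg : ¬ (0 ≤ ξ y) := fun h => hyS ⟨hy, h⟩
        rw [max_eq_right (le_of_not_ge hneg), mul_zero]
    have hintInd : IntegrableOn (S.indicator fun _ => Lam * ξ ystar) (Icc a₁ b₁) volume := by
      rw [IntegrableOn, integrable_indicator_iff hSmeas]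
      refine integrableOn_const (ne_of_lt ?_)
      rw [Measure.restrict_apply hSmeas]
      exact lt_of_le_of_lt (measure_mono inter_subset_right) (lt_top_iff_ne_top.2 hvolI₁)
    have hstep := setIntegral_mono_on hint1 hintInd measurableSet_Icc hub
    rw [setIntegral_indicator hSmeas, inter_eq_self_of_subset_right hSsub,
      setIntegral_const, smul_eq_mul, measureReal_def, hvol] at hstep
    rw [hMattain, hvol, div_le_iff₀ hΛ]
    nlinarith [hstep, hεconv]
  · -- upper bound
    have hnn_pq : ∀ y ∈ Icc p q, 0 ≤ ξ y := fun y hy => (hSIcc ▸ hy : y ∈ S).2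
    have hcont_pq : ContinuousOn ξ (Icc p q) := hξcont.mono hIpq_sub
    have htri : ξ ystar * (q - p) / 2 ≤ ∫ y in Icc p q, ξ y :=
      concave_integral_triangle hpq hystarIcc (hξconc.subset hIpq_sub (convex_Icc _ _))
        hcont_pq (hnn_pq p ⟨le_rfl, hpq⟩) (hnn_pq q ⟨hpq, le_rfl⟩)
    have hint2 : IntegrableOn (fun y => lam * ξ y) (Icc p q) volume :=
      (continuousOn_const.mul hcont_pq).integrableOn_compact isCompact_Icc
    have hint3 : IntegrableOn (fun y => u₁ y * ξ y) (Icc p q) volume := by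
      refine integrableOn_of_bdd' measurableSet_Icc (by simp [Real.volume_Icc])
        (((hc₁.mono hIpq_sub).aestronglyMeasurable measurableSet_Icc).mul
          (hcont_pq.aestronglyMeasurable measurableSet_Icc)) (C := Lam * ξ ystar)
        (fun y hy => ?_)
      have h0 : 0 ≤ u₁ y * ξ y :=
        mul_nonneg (hlam.le.trans (hb₁ y (hIpq_sub hy)).1) (hnn_pq y hy)
      rw [abs_of_nonneg h0]
      exact mul_le_mul (hb₁ y (hIpq_sub hy)).2 (hmax (hIpq_sub hy)) (hnn_pq y hy) hΛ.le
    have hstep2 : lam * ∫ y in Icc p q, ξ y ≤ ∫ y in Icc p q, u₁ y * ξ y := by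
      rw [← integral_const_mul]
      refine setIntegral_mono_on hint2 hint3 measurableSet_Icc (fun y hy => ?_)
      exact mul_le_mul_of_nonneg_right (hb₁ y (hIpq_sub hy)).1 (hnn_pq y hy)
    have hstep3 : ∫ y in Icc p q, u₁ y * ξ y ≤ ε := by
      rw [hεconv]
      have hcongr : ∫ y in Icc p q, u₁ y * ξ y = ∫ y in Icc p q, u₁ y * max (ξ y) 0 :=
        setIntegral_congr_fun measurableSet_Icc (fun y hy => by rw [max_eq_left (hnn_pq y hy)])
      rw [hcongr]
      refine setIntegral_mono_set hint1 ?_ (HasSubset.Subset.eventuallyLE hIpq_sub)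
      exact (ae_restrict_iff' measurableSet_Icc).2
        (Filter.Eventually.of_forall fun y hy => hnnpt y hy)
    have hchain : lam * (ξ ystar * (q - p) / 2) ≤ ε :=
      le_trans (mul_le_mul_of_nonneg_left htri hlam.le) (le_trans hstep2 hstep3)
    rw [hMattain, hvol, le_div_iff₀ hlam]
    calc ξ ystar * (q - p) * lam = 2 * (lam * (ξ ystar * (q - p) / 2)) := by ring
      _ ≤ 2 * ε := by linarith
end
end
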